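/- arXiv:1907.07698 — 6 statements merged into one kernel-verified Lean document; each statement's English description precedes it below -/
import Mathlib

section
/- Let X and Y be Banach spaces with Y ≠ {0}. Then the following are equivalent: (1) the set of bounded linear operators T : X → Y that attain their norm at a strongly exposed point of B_X (i.e. there is a strongly exposed point x of B_X with ‖T(x)‖ = ‖T‖) is dense in the space L(X,Y) of bounded operators with the operator norm; (2) the set of absolutely strongly exposing operators T : X → Y is dense in L(X,Y). -/
open Filter Topology

/-- `x` is a strongly exposed point of the closed unit ball of `X`: it is a unit vector and
some norm-one functional `f` with `f x = 1` satisfies that every sequence of the unit ball on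
which `f` tends to `1` converges in norm to `x`. -/
def StronglyExposedPoint (X : Type*) [NormedAddCommGroup X] [NormedSpace ℝ X]
    (x : X) : Prop :=
  ‖x‖ = 1 ∧ ∃ f : X →L[ℝ] ℝ, ‖f‖ = 1 ∧ f x = 1 ∧
    ∀ u : ℕ → X, (∀ n, ‖u n‖ ≤ 1) → Tendsto (fun n => f (u n)) atTop (𝓝 1) →
      Tendsto u atTop (𝓝 x)

/-- `T` is an absolutely strongly exposing operator: there is a unit vector `x` such that
every sequence of the unit ball on which `‖T ·‖` tends to `‖T‖` has a subsequence converging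
in norm to `x` or to `-x`. -/
def AbsStronglyExposing {X Y : Type*} [NormedAddCommGroup X] [NormedSpace ℝ X]
    [NormedAddCommGroup Y] [NormedSpace ℝ Y] (T : X →L[ℝ] Y) : Prop :=
  ∃ x : X, ‖x‖ = 1 ∧ ∀ u : ℕ → X, (∀ n, ‖u n‖ ≤ 1) →
    Tendsto (fun n => ‖T (u n)‖) atTop (𝓝 ‖T‖) →
      ∃ σ : ℕ → ℕ, StrictMono σ ∧
        (Tendsto (fun k => u (σ k)) atTop (𝓝 x) ∨ Tendsto (fun k => u (σ k)) atTop (𝓝 (-x)))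

lemma maximizing_seq {X Y : Type*} [NormedAddCommGroup X] [NormedSpace ℝ X]
    [NormedAddCommGroup Y] [NormedSpace ℝ Y] (S : X →L[ℝ] Y) :
    ∃ u : ℕ → X, (∀ n, ‖u n‖ ≤ 1) ∧ Tendsto (fun n => ‖S (u n)‖) atTop (𝓝 ‖S‖) := by
  have h : ∀ n : ℕ, ∃ v : X, ‖v‖ ≤ 1 ∧ ‖S‖ - 1/(n+1) ≤ ‖S v‖ := by
    intro n
    have hlt : ‖S‖ - 1/(n+1) < ‖S‖ := by
      have : (0:ℝ) < 1/(n+1) := by positivity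
      linarith
    obtain ⟨v, hv1, hv2⟩ := S.exists_lt_apply_of_lt_opNorm hlt
    exact ⟨v, hv1.le, hv2.le⟩
  choose u hu1 hu2 using h
  refine ⟨u, hu1, ?_⟩
  have hlow : Tendsto (fun n : ℕ => ‖S‖ - 1/(n+1)) atTop (𝓝 ‖S‖) := by
    have := tendsto_one_div_add_atTop_nhds_zero_nat (𝕜 := ℝ)
    simpa using (tendsto_const_nhds (x := ‖S‖)).sub this
  refine tendsto_of_tendsto_of_tendsto_of_le_of_le hlow tendsto_const_nhds hu2 ?_
  intro n
  calc ‖S (u n)‖ ≤ ‖S‖ * ‖u n‖ := S.le_opNorm _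
    _ ≤ ‖S‖ * 1 := by
        exact mul_le_mul_of_nonneg_left (hu1 n) (norm_nonneg _)
    _ = ‖S‖ := mul_one _

lemma ase_attains {X Y : Type*} [NormedAddCommGroup X] [NormedSpace ℝ X]
    [NormedAddCommGroup Y] [NormedSpace ℝ Y] {S : X →L[ℝ] Y}
    (hS : AbsStronglyExposing S) :
    ∃ x : X, StronglyExposedPoint X x ∧ ‖S x‖ = ‖S‖ := by
  obtain ⟨x, hx1, hx⟩ := hS
  -- S attains its norm at x
  have hSx : ‖S x‖ = ‖S‖ := by
    obtain ⟨u, hu1, hu2⟩ := maximizing_seq S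
    obtain ⟨σ, hσ, hc⟩ := hx u hu1 hu2
    have hsub : Tendsto (fun k => ‖S (u (σ k))‖) atTop (𝓝 ‖S‖) :=
      hu2.comp (hσ.tendsto_atTop)
    rcases hc with hc | hc
    · have : Tendsto (fun k => ‖S (u (σ k))‖) atTop (𝓝 ‖S x‖) :=
        ((S.continuous.tendsto x).comp hc).norm
      exact tendsto_nhds_unique this hsub
    · have : Tendsto (fun k => ‖S (u (σ k))‖) atTop (𝓝 ‖S (-x)‖) :=
        ((S.continuous.tendsto (-x)).comp hc).norm
      have h2 := tendsto_nhds_unique this hsub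
      rwa [map_neg, norm_neg] at h2
  -- S ≠ 0
  have hS0 : ‖S‖ ≠ 0 := by
    intro h0
    have hzero : Tendsto (fun _ : ℕ => ‖S ((0:X))‖) atTop (𝓝 ‖S‖) := by
      simp only [map_zero, norm_zero, h0]
      exact tendsto_const_nhds
    obtain ⟨σ, hσ, hc⟩ := hx (fun _ => 0) (fun _ => by simp) hzero
    rcases hc with hc | hc
    · have : (0:X) = x := tendsto_nhds_unique tendsto_const_nhds hc
      rw [← this] at hx1; simp at hx1
    · have : (0:X) = -x := tendsto_nhds_unique tendsto_const_nhds hc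
      have : x = 0 := by simpa [neg_eq_iff_eq_neg] using this.symm
      rw [this] at hx1; simp at hx1
  have hSxne : S x ≠ 0 := by
    intro h; rw [h, norm_zero] at hSx; exact hS0 hSx.symm
  obtain ⟨g, hg1, hg2⟩ := exists_dual_vector ℝ (S x) (norm_ne_zero_iff.mpr hSxne)
  set f : X →L[ℝ] ℝ := ‖S‖⁻¹ • (g.comp S) with hf
  have hfx : f x = 1 := by
    simp [hf, hg2, hSx, inv_mul_cancel₀ hS0]
  have hfle : ∀ v : X, ‖v‖ ≤ 1 → f v ≤ 1 ∧ -1 ≤ f v := by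
    intro v hv
    have h1 : |f v| ≤ 1 := by
      have h2 : |g (S v)| ≤ ‖S v‖ := by
        calc |g (S v)| ≤ ‖g‖ * ‖S v‖ := g.le_opNorm _
          _ = ‖S v‖ := by rw [hg1, one_mul]
      have h3 : ‖S v‖ ≤ ‖S‖ := by
        calc ‖S v‖ ≤ ‖S‖ * ‖v‖ := S.le_opNorm _
          _ ≤ ‖S‖ * 1 := mul_le_mul_of_nonneg_left hv (norm_nonneg _)
          _ = ‖S‖ := mul_one _
      have : |f v| = ‖S‖⁻¹ * |g (S v)| := by
        simp [hf, abs_mul, abs_of_nonneg (inv_nonneg.mpr (norm_nonneg S))]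
      rw [this]
      calc ‖S‖⁻¹ * |g (S v)| ≤ ‖S‖⁻¹ * ‖S‖ := by
            refine mul_le_mul_of_nonneg_left (h2.trans h3) (by positivity)
        _ = 1 := inv_mul_cancel₀ hS0
    exact ⟨(abs_le.mp h1).2, (abs_le.mp h1).1⟩
  have hfnorm : ‖f‖ = 1 := by
    apply le_antisymm
    · refine ContinuousLinearMap.opNorm_le_bound _ zero_le_one ?_
      intro v
      rcases eq_or_ne v 0 with rfl | hv0
      · simp
      · have h := (hfle (‖v‖⁻¹ • v) (by
          rw [norm_smul, norm_inv, norm_norm, inv_mul_cancel₀ (norm_ne_zero_iff.mpr hv0)]))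
        have hfv : f (‖v‖⁻¹ • v) = ‖v‖⁻¹ * f v := by simp
        rw [hfv] at h
        rw [one_mul, Real.norm_eq_abs]
        have hvpos : (0:ℝ) < ‖v‖ := norm_pos_iff.mpr hv0
        have habs : |‖v‖⁻¹ * f v| ≤ 1 := abs_le.mpr ⟨h.2, h.1⟩
        rw [abs_mul, abs_of_pos (inv_pos.mpr hvpos)] at habs
        calc |f v| = ‖v‖ * (‖v‖⁻¹ * |f v|) := by field_simp
          _ ≤ ‖v‖ * 1 := mul_le_mul_of_nonneg_left habs hvpos.le
          _ = ‖v‖ := mul_one _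
    · calc (1:ℝ) = |f x| := by rw [hfx]; simp
        _ ≤ ‖f‖ * ‖x‖ := f.le_opNorm x
        _ = ‖f‖ := by rw [hx1, mul_one]
  refine ⟨x, ⟨hx1, f, hfnorm, hfx, ?_⟩, hSx⟩
  intro u hu1 hfu
  -- ‖S (u n)‖ → ‖S‖
  have hgS : Tendsto (fun n => g (S (u n))) atTop (𝓝 ‖S‖) := by
    have : ∀ n, g (S (u n)) = ‖S‖ * f (u n) := by
      intro n; simp [hf, mul_comm, mul_assoc, mul_inv_cancel₀ hS0]
      field_simp
    simp_rw [this]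
    simpa using (tendsto_const_nhds (x := ‖S‖)).mul hfu
  have hSu : Tendsto (fun n => ‖S (u n)‖) atTop (𝓝 ‖S‖) := by
    refine tendsto_of_tendsto_of_tendsto_of_le_of_le hgS tendsto_const_nhds ?_ ?_
    · intro n
      calc g (S (u n)) ≤ |g (S (u n))| := le_abs_self _
        _ ≤ ‖g‖ * ‖S (u n)‖ := g.le_opNorm _
        _ = ‖S (u n)‖ := by rw [hg1, one_mul]
    · intro n
      calc ‖S (u n)‖ ≤ ‖S‖ * ‖u n‖ := S.le_opNorm _
        _ ≤ ‖S‖ * 1 := mul_le_mul_of_nonneg_left (hu1 n) (norm_nonneg _)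
        _ = ‖S‖ := mul_one _
  -- every subsequence has a sub-subsequence converging to x
  refine tendsto_of_subseq_tendsto ?_
  intro ns hns
  obtain ⟨σ, hσ, hc⟩ := hx (fun n => u (ns n)) (fun n => hu1 _) (hSu.comp hns)
  rcases hc with hc | hc
  · exact ⟨σ, hc⟩
  · exfalso
    have h1 : Tendsto (fun k => f (u (ns (σ k)))) atTop (𝓝 (f (-x))) :=
      (f.continuous.tendsto (-x)).comp hc
    have h2 : Tendsto (fun k => f (u (ns (σ k)))) atTop (𝓝 1) :=
      hfu.comp (hns.comp hσ.tendsto_atTop)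
    have := tendsto_nhds_unique h1 h2
    rw [map_neg, hfx] at this
    norm_num at this

lemma perturb_ase {X Y : Type*} [NormedAddCommGroup X] [NormedSpace ℝ X]
    [NormedAddCommGroup Y] [NormedSpace ℝ Y] [Nontrivial Y] {S : X →L[ℝ] Y} {x : X}
    (hxse : StronglyExposedPoint X x) (hSx : ‖S x‖ = ‖S‖) {δ : ℝ} (hδ : 0 < δ) :
    ∃ S' : X →L[ℝ] Y, AbsStronglyExposing S' ∧ ‖S' - S‖ ≤ δ := by
  obtain ⟨hx1, f, hf1, hfx, hexp⟩ := hxse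
  -- choose y with ‖y‖ = 1 and S x = ‖S‖ • y
  obtain ⟨y, hy1, hy2⟩ : ∃ y : Y, ‖y‖ = 1 ∧ S x = ‖S‖ • y := by
    rcases eq_or_ne (S x) 0 with h0 | h0
    · have hS0 : ‖S‖ = 0 := by rw [← hSx, h0, norm_zero]
      obtain ⟨y₀, hy₀⟩ := exists_ne (0 : Y)
      refine ⟨‖y₀‖⁻¹ • y₀, ?_, by rw [h0, hS0, zero_smul]⟩
      rw [norm_smul, norm_inv, norm_norm, inv_mul_cancel₀ (norm_ne_zero_iff.mpr hy₀)]
    · refine ⟨‖S x‖⁻¹ • S x, ?_, ?_⟩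
      · rw [norm_smul, norm_inv, norm_norm, inv_mul_cancel₀ (norm_ne_zero_iff.mpr h0)]
      · rw [smul_smul, hSx, mul_inv_cancel₀ (by rw [← hSx]; exact norm_ne_zero_iff.mpr h0),
          one_smul]
  set A : X →L[ℝ] Y := f.smulRight y with hA
  set S' : X →L[ℝ] Y := S + δ • A with hS'
  have hAnorm : ‖A‖ = 1 := by rw [hA, ContinuousLinearMap.norm_smulRight_apply, hf1, hy1, mul_one]
  have hdiff : ‖S' - S‖ ≤ δ := by
    rw [hS', add_sub_cancel_left, norm_smul δ A, hAnorm, mul_one, Real.norm_eq_abs,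
      abs_of_pos hδ]
  refine ⟨S', ?_, hdiff⟩
  -- pointwise bound
  have hfv : ∀ v : X, ‖v‖ ≤ 1 → |f v| ≤ 1 := by
    intro v hv
    calc |f v| ≤ ‖f‖ * ‖v‖ := f.le_opNorm v
      _ ≤ 1 * 1 := by rw [hf1]; exact mul_le_mul_of_nonneg_left hv zero_le_one
      _ = 1 := one_mul 1
  have hbound : ∀ v : X, ‖v‖ ≤ 1 → ‖S' v‖ ≤ ‖S‖ + δ * |f v| := by
    intro v hv
    have : S' v = S v + (δ * f v) • y := by
      simp [hS', hA, smul_smul]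
    rw [this]
    calc ‖S v + (δ * f v) • y‖ ≤ ‖S v‖ + ‖(δ * f v) • y‖ := norm_add_le _ _
      _ = ‖S v‖ + |δ * f v| := by rw [norm_smul, hy1, mul_one, Real.norm_eq_abs]
      _ ≤ ‖S‖ + δ * |f v| := by
          have h1 : ‖S v‖ ≤ ‖S‖ := by
            calc ‖S v‖ ≤ ‖S‖ * ‖v‖ := S.le_opNorm v
              _ ≤ ‖S‖ * 1 := mul_le_mul_of_nonneg_left hv (norm_nonneg _)
              _ = ‖S‖ := mul_one _
          rw [abs_mul, abs_of_pos hδ]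
          linarith
  have hS'x : ‖S' x‖ = ‖S‖ + δ := by
    have : S' x = (‖S‖ + δ) • y := by
      simp only [hS', ContinuousLinearMap.add_apply, ContinuousLinearMap.smul_apply, hA,
        ContinuousLinearMap.smulRight_apply, hfx, one_smul, hy2, ← add_smul]
    rw [this, norm_smul, hy1, mul_one, Real.norm_eq_abs, abs_of_pos (by positivity)]
  have hS'norm : ‖S'‖ = ‖S‖ + δ := by
    apply le_antisymm
    · calc ‖S'‖ ≤ ‖S‖ + ‖δ • A‖ := norm_add_le _ _
        _ = ‖S‖ + δ := by
            rw [norm_smul δ A, hAnorm, mul_one, Real.norm_eq_abs, abs_of_pos hδ]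
    · calc ‖S‖ + δ = ‖S' x‖ := hS'x.symm
        _ ≤ ‖S'‖ * ‖x‖ := S'.le_opNorm x
        _ = ‖S'‖ := by rw [hx1, mul_one]
  refine ⟨x, hx1, ?_⟩
  intro u hu1 htend
  rw [hS'norm] at htend
  -- |f (u n)| → 1
  have habs : Tendsto (fun n => |f (u n)|) atTop (𝓝 1) := by
    have hlow : Tendsto (fun n => (‖S' (u n)‖ - ‖S‖) / δ) atTop (𝓝 1) := by
      have := (htend.sub (tendsto_const_nhds (x := ‖S‖))).div_const δ
      have heq : (‖S‖ + δ - ‖S‖) / δ = 1 := by field_simp; ring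
      rwa [heq] at this
    refine tendsto_of_tendsto_of_tendsto_of_le_of_le hlow tendsto_const_nhds ?_ ?_
    · intro n
      have := hbound (u n) (hu1 n)
      rw [div_le_iff₀ hδ]
      linarith
    · intro n; exact hfv (u n) (hu1 n)
  -- Bolzano-Weierstrass on f (u n)
  have hmem : ∀ n, f (u n) ∈ Set.Icc (-1 : ℝ) 1 := fun n => abs_le.mp (hfv (u n) (hu1 n))
  obtain ⟨a, _, σ, hσ, hconv⟩ :=
    tendsto_subseq_of_bounded (Metric.isBounded_Icc (-1:ℝ) 1) hmem
  have ha : |a| = 1 := by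
    have h1 : Tendsto (fun k => |f (u (σ k))|) atTop (𝓝 |a|) := hconv.abs
    have h2 : Tendsto (fun k => |f (u (σ k))|) atTop (𝓝 1) := habs.comp hσ.tendsto_atTop
    exact tendsto_nhds_unique h1 h2
  rcases abs_eq (by norm_num : (0:ℝ) ≤ 1) |>.mp ha with ha1 | ha1
  · refine ⟨σ, hσ, Or.inl ?_⟩
    exact hexp (fun k => u (σ k)) (fun k => hu1 _) (by rwa [ha1] at hconv)
  · refine ⟨σ, hσ, Or.inr ?_⟩
    have hneg : Tendsto (fun k => f (-(u (σ k)))) atTop (𝓝 1) := by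
      simp only [map_neg]
      have := hconv.neg
      rwa [ha1, neg_neg] at this
    have := hexp (fun k => -(u (σ k))) (fun k => by rw [norm_neg]; exact hu1 _) hneg
    have h2 := this.neg
    simpa using h2

/-- For Banach spaces `X`, `Y` with `Y ≠ {0}`: the operators attaining their norm at a
strongly exposed point of `B_X` are dense in `L(X,Y)` iff the absolutely strongly exposing
operators are dense in `L(X,Y)`. -/
theorem stmt_12 {X Y : Type*} [NormedAddCommGroup X] [NormedSpace ℝ X] [CompleteSpace X]
    [NormedAddCommGroup Y] [NormedSpace ℝ Y] [CompleteSpace Y] [Nontrivial Y] :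
    (∀ T : X →L[ℝ] Y, ∀ ε > (0 : ℝ), ∃ S : X →L[ℝ] Y,
      (∃ x : X, StronglyExposedPoint X x ∧ ‖S x‖ = ‖S‖) ∧ ‖T - S‖ < ε) ↔
    (∀ T : X →L[ℝ] Y, ∀ ε > (0 : ℝ), ∃ S : X →L[ℝ] Y,
      AbsStronglyExposing S ∧ ‖T - S‖ < ε) := by
  constructor
  · intro h T ε hε
    obtain ⟨S, ⟨x, hx, hSx⟩, hTS⟩ := h T (ε/2) (by positivity)
    obtain ⟨S', hS', hd⟩ := perturb_ase hx hSx (show (0:ℝ) < ε/4 by positivity)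
    refine ⟨S', hS', ?_⟩
    calc ‖T - S'‖ = ‖(T - S) + (S - S')‖ := by rw [sub_add_sub_cancel]
      _ ≤ ‖T - S‖ + ‖S - S'‖ := norm_add_le _ _
      _ = ‖T - S‖ + ‖S' - S‖ := by rw [norm_sub_rev S S']
      _ < ε/2 + ε/4 := by linarith [hd]
      _ < ε := by linarith
  · intro h T ε hε
    obtain ⟨S, hS, hTS⟩ := h T ε hε
    exact ⟨S, ase_attains hS, hTS⟩
end

section
/- Let X be a Banach space and let S be a uniformly strongly exposed subset of the unit sphere of X. Then the norm closure of S is also a uniformly strongly exposed set; that is, there is a family (g_x)_{x∈cl(S)} in X* with ‖g_x‖ = g_x(x) = 1 for every x ∈ cl(S) such that for every ε > 0 there exists δ > 0 with: x ∈ cl(S), z ∈ B_X and g_x(z) > 1−δ imply ‖x−z‖ < ε. -/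
open Filter Topology Metric

/-- `S` is a uniformly strongly exposed subset of the unit sphere of `X`: every `x ∈ S` is a
unit vector, and there is a family of functionals `(F x)_{x ∈ S}` with `‖F x‖ = F x x = 1`
such that for every `ε > 0` there is `δ > 0` with: `x ∈ S`, `‖z‖ ≤ 1` and `F x z > 1 - δ`
imply `‖x - z‖ < ε`. -/
def UnifStronglyExposed {X : Type*} [NormedAddCommGroup X] [NormedSpace ℝ X]
    (S : Set X) : Prop :=
  (∀ x ∈ S, ‖x‖ = 1) ∧
  ∃ F : X → X →L[ℝ] ℝ,
    (∀ x ∈ S, ‖F x‖ = 1 ∧ F x x = 1) ∧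
    ∀ ε > (0 : ℝ), ∃ δ > (0 : ℝ), ∀ x ∈ S, ∀ z : X, ‖z‖ ≤ 1 → F x z > 1 - δ → ‖x - z‖ < ε

/-- Auxiliary: a weak-* cluster point of the functionals along points of `S` tending to `y`. -/
lemma exists_weakCluster {X : Type*} [NormedAddCommGroup X] [NormedSpace ℝ X]
    (S : Set X) (F : X → X →L[ℝ] ℝ) (hF : ∀ x ∈ S, ‖F x‖ = 1)
    {y : X} (hy : y ∈ closure S) :
    ∃ g : X →L[ℝ] ℝ, ‖g‖ ≤ 1 ∧
      ∀ z : X, ∀ ε > (0 : ℝ), ∃ᶠ x in 𝓝[S] y, |F x z - g z| < ε := by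
  have hne : (𝓝[S] y).NeBot := mem_closure_iff_nhdsWithin_neBot.mp hy
  set f : X → WeakDual ℝ X := fun x => StrongDual.toWeakDual (F x) with hf
  have hmap : Filter.map f (𝓝[S] y) ≤
      Filter.principal (WeakDual.toStrongDual ⁻¹' closedBall (0 : StrongDual ℝ X) 1) := by
    rw [Filter.le_principal_iff, Filter.mem_map]
    filter_upwards [self_mem_nhdsWithin] with x hx
    simp only [Set.mem_preimage, mem_closedBall, dist_zero_right]
    have : ‖F x‖ = 1 := hF x hx
    simp only [hf]
    exact le_of_eq this
  obtain ⟨g, hgK, hg⟩ := (WeakDual.isCompact_closedBall (𝕜 := ℝ) (0 : StrongDual ℝ X)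
      1).exists_clusterPt hmap
  refine ⟨WeakDual.toStrongDual g, ?_, ?_⟩
  · simpa [dist_zero_right] using hgK
  · intro z ε hε
    have hU : {h : WeakDual ℝ X | |h z - g z| < ε} ∈ 𝓝 g := by
      have hcont : Continuous fun h : WeakDual ℝ X => |h z - g z| :=
        ((WeakBilin.eval_continuous _ z).sub continuous_const).abs
      have : IsOpen {h : WeakDual ℝ X | |h z - g z| < ε} :=
        isOpen_lt hcont continuous_const
      exact this.mem_nhds (by simp [hε])
    have hfr : ∃ᶠ h in Filter.map f (𝓝[S] y), |h z - g z| < ε := by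
      rw [Filter.frequently_iff]
      intro V hV
      obtain ⟨h, hU', hV'⟩ := clusterPt_iff_nonempty.mp hg hU hV
      exact ⟨h, hV', hU'⟩
    rw [Filter.frequently_map] at hfr
    exact hfr.mono fun x hx => hx

/-- In a Banach space, the norm closure of a uniformly strongly exposed subset of the unit
sphere is again uniformly strongly exposed. -/
theorem stmt_13 {X : Type*} [NormedAddCommGroup X] [NormedSpace ℝ X] [CompleteSpace X]
    (S : Set X) (hS : UnifStronglyExposed S) :
    UnifStronglyExposed (closure S) := by
  classical
  obtain ⟨hsph, F, hF, hεδ⟩ := hS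
  have hsph' : ∀ y ∈ closure S, ‖y‖ = 1 := by
    intro y hy
    have : closure S ⊆ {x : X | ‖x‖ = 1} :=
      closure_minimal (fun x hx => hsph x hx) (isClosed_eq continuous_norm continuous_const)
    exact this hy
  have hFnorm : ∀ x ∈ S, ‖F x‖ = 1 := fun x hx => (hF x hx).1
  set G : X → X →L[ℝ] ℝ := fun y =>
    if h : y ∈ closure S then (exists_weakCluster S F hFnorm h).choose else 0 with hG
  have hGspec : ∀ y (h : y ∈ closure S), ‖G y‖ ≤ 1 ∧
      ∀ z : X, ∀ ε > (0 : ℝ), ∃ᶠ x in 𝓝[S] y, |F x z - (G y) z| < ε := by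
    intro y h
    simp only [hG, dif_pos h]
    exact (exists_weakCluster S F hFnorm h).choose_spec
  -- key: G y y = 1
  have hGval : ∀ y ∈ closure S, G y y = 1 := by
    intro y hy
    obtain ⟨hle, hfreq⟩ := hGspec y hy
    by_contra hne
    set ε := |G y y - 1| with hεdef
    have hεpos : 0 < ε := abs_pos.mpr (sub_ne_zero.mpr hne)
    have hev : ∀ᶠ x in 𝓝[S] y, x ∈ S ∧ ‖x - y‖ < ε / 2 := by
      have h1 : ∀ᶠ x in 𝓝[S] y, x ∈ S := eventually_mem_nhdsWithin
      have h2 : ∀ᶠ x in 𝓝[S] y, ‖x - y‖ < ε / 2 := by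
        have : ∀ᶠ x in 𝓝 y, ‖x - y‖ < ε / 2 := by
          have := Metric.ball_mem_nhds y (half_pos hεpos)
          filter_upwards [this] with x hx
          simpa [dist_eq_norm] using hx
        exact this.filter_mono nhdsWithin_le_nhds
      exact h1.and h2
    obtain ⟨x, hx1, hx2, hx3⟩ := ((hfreq y (ε / 2) (half_pos hεpos)).and_eventually hev).exists
    have hFxy : |F x y - 1| ≤ ε / 2 := by
      have : F x y - 1 = F x (y - x) := by
        rw [map_sub, (hF x hx2).2]
      rw [this]
      calc |F x (y - x)| ≤ ‖F x‖ * ‖y - x‖ := (F x).le_opNorm _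
        _ = ‖y - x‖ := by rw [hFnorm x hx2, one_mul]
        _ ≤ ε / 2 := by rw [norm_sub_rev]; exact le_of_lt hx3
    have : ε < ε := by
      calc ε = |G y y - 1| := rfl
        _ ≤ |G y y - F x y| + |F x y - 1| := abs_sub_le _ _ _
        _ < ε / 2 + ε / 2 := by
            refine add_lt_add_of_lt_of_le ?_ hFxy
            rw [abs_sub_comm]; exact hx1
        _ = ε := by ring
    exact lt_irrefl _ this
  refine ⟨hsph', G, ?_, ?_⟩
  · intro y hy
    refine ⟨le_antisymm (hGspec y hy).1 ?_, hGval y hy⟩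
    have := (G y).le_opNorm y
    rw [hGval y hy, hsph' y hy, mul_one] at this
    calc (1 : ℝ) = ‖(1 : ℝ)‖ := by norm_num
      _ ≤ ‖G y‖ := this
  · intro ε hε
    obtain ⟨δ, hδ, hδprop⟩ := hεδ (ε / 2) (half_pos hε)
    refine ⟨δ / 2, half_pos hδ, ?_⟩
    intro y hy z hz hgz
    obtain ⟨hle, hfreq⟩ := hGspec y hy
    have hev : ∀ᶠ x in 𝓝[S] y, x ∈ S ∧ ‖x - y‖ < ε / 2 := by
      have h1 : ∀ᶠ x in 𝓝[S] y, x ∈ S := eventually_mem_nhdsWithin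
      have h2 : ∀ᶠ x in 𝓝[S] y, ‖x - y‖ < ε / 2 := by
        have : ∀ᶠ x in 𝓝 y, ‖x - y‖ < ε / 2 := by
          filter_upwards [Metric.ball_mem_nhds y (half_pos hε)] with x hx
          simpa [dist_eq_norm] using hx
        exact this.filter_mono nhdsWithin_le_nhds
      exact h1.and h2
    obtain ⟨x, hx1, hx2, hx3⟩ :=
      ((hfreq z (δ / 2) (half_pos hδ)).and_eventually hev).exists
    have hFxz : F x z > 1 - δ := by
      have h1 : G y z - δ / 2 < F x z := by
        have := abs_lt.mp hx1
        linarith [this.1]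
      linarith
    have hxz : ‖x - z‖ < ε / 2 := hδprop x hx2 z hz hFxz
    calc ‖y - z‖ = ‖(y - x) + (x - z)‖ := by rw [sub_add_sub_cancel]
      _ ≤ ‖y - x‖ + ‖x - z‖ := norm_add_le _ _
      _ < ε / 2 + ε / 2 := by
          refine add_lt_add ?_ hxz
          rw [norm_sub_rev]; exact hx3
      _ = ε := by ring
end

section
/- Let X and Y be Banach spaces with X ≠ {0}, and let Z = X ⊕₁ Y. If the unit sphere of Z contains a uniformly strongly exposed set Γ whose closed convex hull equals B_Z, then the unit sphere of X contains a uniformly strongly exposed set Δ whose closed convex hull equals B_X. -/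
set_option linter.unusedSectionVars false
set_option maxHeartbeats 1000000

section Aux

variable {X Y : Type*} [NormedAddCommGroup X] [NormedSpace ℝ X]
  [NormedAddCommGroup Y] [NormedSpace ℝ Y]

lemma norm_L1_eq (f : WithLp 1 (X × Y)) : ‖f‖ = ‖f.fst‖ + ‖f.snd‖ := by
  rw [WithLp.prod_norm_eq_add (by norm_num)]
  norm_num

/-- inclusion `X → X ⊕₁ Y` as a linear isometry -/
noncomputable def inlIso : X →ₗᵢ[ℝ] WithLp 1 (X × Y) where
  toLinearMap := ((WithLp.linearEquiv 1 ℝ (X × Y)).symm.toLinearMap).comp (LinearMap.inl ℝ X Y)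
  norm_map' := fun x => WithLp.norm_toLp_fst 1 X Y x

lemma inlIso_apply (x : X) :
    (inlIso x : WithLp 1 (X × Y)) = (WithLp.equiv 1 (X × Y)).symm (x, 0) := rfl

lemma inlIso_fst (x : X) : (inlIso x : WithLp 1 (X × Y)).fst = x := rfl

lemma inlIso_snd (x : X) : (inlIso x : WithLp 1 (X × Y)).snd = 0 := rfl

/-- first projection as a linear map -/
noncomputable def fstL : WithLp 1 (X × Y) →ₗ[ℝ] X :=
  (LinearMap.fst ℝ X Y).comp (WithLp.linearEquiv 1 ℝ (X × Y)).toLinearMap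

lemma fstL_apply (f : WithLp 1 (X × Y)) : fstL f = f.fst := rfl

lemma eq_symm_mk (f : WithLp 1 (X × Y)) :
    (WithLp.equiv 1 (X × Y)).symm (f.fst, f.snd) = f := rfl

lemma key_lemma {Γ : Set (WithLp 1 (X × Y))}
    (hΓs : ∀ x ∈ Γ, ‖x‖ = 1)
    {F : WithLp 1 (X × Y) → WithLp 1 (X × Y) →L[ℝ] ℝ}
    (hF : ∀ x ∈ Γ, ‖F x‖ = 1 ∧ F x x = 1)
    (hFε : ∀ ε > (0:ℝ), ∃ δ > (0:ℝ), ∀ x ∈ Γ, ∀ z, ‖z‖ ≤ 1 → F x z > 1 - δ → ‖x - z‖ < ε)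
    {γ : WithLp 1 (X × Y)} (hγ : γ ∈ Γ) : γ.fst = 0 ∨ γ.snd = 0 := by
  by_contra h
  push_neg at h
  obtain ⟨hu, hv⟩ := h
  set u := γ.fst with hu'
  set v := γ.snd with hv'
  have ha : (0:ℝ) < ‖u‖ := norm_pos_iff.2 hu
  have hb : (0:ℝ) < ‖v‖ := norm_pos_iff.2 hv
  have hab : ‖u‖ + ‖v‖ = 1 := by rw [← norm_L1_eq γ]; exact hΓs γ hγ
  set p : WithLp 1 (X × Y) := (WithLp.equiv 1 (X × Y)).symm (‖u‖⁻¹ • u, 0) with hp'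
  set q : WithLp 1 (X × Y) := (WithLp.equiv 1 (X × Y)).symm (0, ‖v‖⁻¹ • v) with hq'
  have hpn : ‖p‖ = 1 := by
    rw [hp', WithLp.equiv_symm_apply, WithLp.norm_toLp_fst, norm_smul, norm_inv, norm_norm]
    field_simp
  have hqn : ‖q‖ = 1 := by
    rw [hq', WithLp.equiv_symm_apply, WithLp.norm_toLp_snd, norm_smul, norm_inv, norm_norm]
    field_simp
  have hdecomp : γ = ‖u‖ • p + ‖v‖ • q := by
    have h1 : ‖u‖ • ((‖u‖⁻¹ • u : X), (0:Y)) + ‖v‖ • ((0:X), (‖v‖⁻¹ • v : Y)) = (u, v) := by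
      simp [Prod.smul_mk, smul_inv_smul₀ ha.ne', smul_inv_smul₀ hb.ne', Prod.ext_iff]
    rw [hp', hq', WithLp.equiv_symm_apply, ← WithLp.toLp_smul, ← WithLp.toLp_smul, ← WithLp.toLp_add, h1]
    rfl
  obtain ⟨hFn, hF1⟩ := hF γ hγ
  have hFp : F γ p ≤ 1 := by
    calc F γ p ≤ ‖F γ p‖ := le_abs_self _
    _ ≤ ‖F γ‖ * ‖p‖ := (F γ).le_opNorm p
    _ = 1 := by rw [hFn, hpn, one_mul]
  have hFq : F γ q ≤ 1 := by
    calc F γ q ≤ ‖F γ q‖ := le_abs_self _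
    _ ≤ ‖F γ‖ * ‖q‖ := (F γ).le_opNorm q
    _ = 1 := by rw [hFn, hqn, one_mul]
  have hcombo : ‖u‖ * F γ p + ‖v‖ * F γ q = 1 := by
    have h2 := congrArg (F γ) hdecomp
    simp only [map_add, map_smul, smul_eq_mul, hF1] at h2
    linarith
  have hFp1 : F γ p = 1 := by nlinarith
  have hdist : ∀ ε > (0:ℝ), ‖γ - p‖ < ε := by
    intro ε hε
    obtain ⟨δ, hδ, hδ'⟩ := hFε ε hε
    exact hδ' γ hγ p hpn.le (by linarith)
  have hgp : γ = p := by
    by_contra hne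
    have h0 : (0:ℝ) < ‖γ - p‖ := by
      rw [norm_pos_iff, sub_ne_zero]; exact hne
    exact lt_irrefl _ (hdist _ h0)
  apply hv
  rw [hv', hgp, hp']
  rfl

end Aux

/-- If the unit sphere of `Z = X ⊕₁ Y` contains a uniformly strongly exposed set `Γ` whose
closed convex hull is `B_Z`, then the unit sphere of `X` contains a uniformly strongly
exposed set `Δ` whose closed convex hull is `B_X`. -/
theorem stmt_15 {X Y : Type*}
    [NormedAddCommGroup X] [NormedSpace ℝ X] [CompleteSpace X] [Nontrivial X]
    [NormedAddCommGroup Y] [NormedSpace ℝ Y] [CompleteSpace Y]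
    (Γ : Set (WithLp 1 (X × Y))) (hΓ : UnifStronglyExposed Γ)
    (hull : closure (convexHull ℝ Γ) = Metric.closedBall (0 : WithLp 1 (X × Y)) 1) :
    ∃ Δ : Set X, UnifStronglyExposed Δ ∧
      closure (convexHull ℝ Δ) = Metric.closedBall (0 : X) 1 := by
  classical
  obtain ⟨hΓs, F, hF, hFε⟩ := hΓ
  set Δ : Set X := {x : X | (inlIso x : WithLp 1 (X × Y)) ∈ Γ} with hΔ'
  have hΔs : ∀ x ∈ Δ, ‖x‖ = 1 := by
    intro x hx
    have := hΓs _ hx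
    rwa [inlIso.norm_map] at this
  refine ⟨Δ, ⟨hΔs, ?_⟩, ?_⟩
  · -- the functionals
    refine ⟨fun x => (F (inlIso x)).comp inlIso.toContinuousLinearMap, ?_, ?_⟩
    · intro x hx
      have happ : ∀ z : X,
          ((F (inlIso x)).comp inlIso.toContinuousLinearMap) z = F (inlIso x) (inlIso z) := by
        intro z; rfl
      have hGx : ((F (inlIso x)).comp inlIso.toContinuousLinearMap) x = 1 := by
        rw [happ]; exact (hF _ hx).2
      constructor
      · apply le_antisymm
        · apply ContinuousLinearMap.opNorm_le_bound _ zero_le_one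
          intro z
          calc ‖((F (inlIso x)).comp inlIso.toContinuousLinearMap) z‖
              = ‖F (inlIso x) (inlIso z)‖ := by rw [happ]
            _ ≤ ‖F (inlIso x)‖ * ‖(inlIso z : WithLp 1 (X × Y))‖ := (F _).le_opNorm _
            _ = 1 * ‖z‖ := by rw [(hF _ hx).1, inlIso.norm_map]
        · have h1 := ((F (inlIso x)).comp inlIso.toContinuousLinearMap).le_opNorm x
          rw [hGx, hΔs x hx, mul_one] at h1
          calc (1:ℝ) ≤ ‖(1:ℝ)‖ := by norm_num
            _ ≤ _ := by rw [← hGx] at h1 ⊢; exact h1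
      · exact hGx
    · intro ε hε
      obtain ⟨δ, hδ, hδ'⟩ := hFε ε hε
      refine ⟨δ, hδ, ?_⟩
      intro x hx z hz hFz
      have h1 : ‖(inlIso z : WithLp 1 (X × Y))‖ ≤ 1 := by rw [inlIso.norm_map]; exact hz
      have h2 : F (inlIso x) (inlIso z) > 1 - δ := hFz
      have h3 := hδ' (inlIso x) hx (inlIso z) h1 h2
      rwa [← inlIso.map_sub, inlIso.norm_map] at h3
  · -- the hull
    have hCconv : Convex ℝ (closure (convexHull ℝ Δ)) := (convex_convexHull ℝ Δ).closure
    have hsub1 : closure (convexHull ℝ Δ) ⊆ Metric.closedBall (0 : X) 1 := by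
      apply closure_minimal _ Metric.isClosed_closedBall
      apply convexHull_min _ (convex_closedBall 0 1)
      intro x hx
      rw [Metric.mem_closedBall, dist_zero_right]
      exact (hΔs x hx).le
    have hsphere : ∀ x : X, ‖x‖ = 1 → x ∈ closure (convexHull ℝ Δ) := by
      intro x hx
      rw [Metric.mem_closure_iff]
      intro ε hε
      set ε' := min (ε/3) (1/2) with hε'
      have hε'pos : 0 < ε' := lt_min (by linarith) (by norm_num)
      have hε'le : ε' ≤ ε/3 := min_le_left _ _
      have hε'half : ε' ≤ 1/2 := min_le_right _ _
      have hmem : (inlIso x : WithLp 1 (X × Y)) ∈ closure (convexHull ℝ Γ) := by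
        rw [hull, Metric.mem_closedBall, dist_zero_right, inlIso.norm_map, hx]
      rw [Metric.mem_closure_iff] at hmem
      obtain ⟨c, hc, hdc⟩ := hmem ε' hε'pos
      rw [convexHull_eq] at hc
      obtain ⟨ι', t, w, z, hw0, hw1, hz, hcen⟩ := hc
      rw [Finset.centerMass_eq_of_sum_1 _ _ hw1] at hcen
      set tX := t.filter (fun i => (z i).snd = 0) with htX
      set lam := ∑ i ∈ tX, w i with hlam'
      set a := ∑ i ∈ tX, w i • (z i).fst with ha'
      have hfst : c.fst = a := by
        have h1 : c.fst = ∑ i ∈ t, w i • (z i).fst := by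
          rw [← hcen, ← fstL_apply, map_sum]
          exact Finset.sum_congr rfl (fun i _ => by rw [map_smul, fstL_apply])
        rw [h1, ← Finset.sum_filter_add_sum_filter_not t (fun i => (z i).snd = 0)]
        have hzero : ∑ i ∈ t.filter (fun i => ¬ (z i).snd = 0), w i • (z i).fst = 0 := by
          apply Finset.sum_eq_zero
          intro i hi
          rw [Finset.mem_filter] at hi
          rcases key_lemma hΓs hF hFε (hz i hi.1) with h | h
          · rw [h, smul_zero]
          · exact absurd h hi.2
        rw [hzero, add_zero]
      have hdxc : ‖x - c.fst‖ < ε' := by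
        have h1 : ‖x - c.fst‖ ≤ ‖(inlIso x : WithLp 1 (X × Y)) - c‖ := by
          have h2 : ((inlIso x : WithLp 1 (X × Y)) - c).fst = x - c.fst := rfl
          rw [norm_L1_eq ((inlIso x : WithLp 1 (X × Y)) - c), h2]
          linarith [norm_nonneg ((inlIso x : WithLp 1 (X × Y)) - c).snd]
        rw [dist_eq_norm] at hdc
        linarith
      have hnormfst : ∀ i ∈ tX, ‖(z i).fst‖ = 1 := by
        intro i hi
        rw [htX, Finset.mem_filter] at hi
        have h1 := hΓs (z i) (hz i hi.1)
        rw [norm_L1_eq, hi.2, norm_zero, add_zero] at h1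
        exact h1
      have hwa : ‖a‖ ≤ lam := by
        calc ‖a‖ ≤ ∑ i ∈ tX, ‖w i • (z i).fst‖ := norm_sum_le _ _
        _ = ∑ i ∈ tX, w i := Finset.sum_congr rfl (fun i hi => by
            rw [norm_smul, hnormfst i hi, mul_one, Real.norm_eq_abs,
              abs_of_nonneg (hw0 i (Finset.filter_subset _ _ hi))])
      have hlam1 : lam ≤ 1 := by
        rw [← hw1]
        exact Finset.sum_le_sum_of_subset_of_nonneg (Finset.filter_subset _ _)
          (fun i hi _ => hw0 i hi)
      have hanorm : 1 - ε' ≤ ‖a‖ := by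
        have h1 : ‖x‖ - ‖x - c.fst‖ ≤ ‖c.fst‖ := by
          have := norm_sub_norm_le x (x - c.fst)
          simpa using this
        rw [hx] at h1
        rw [← hfst]
        linarith
      have hlamlb : 1 - ε' ≤ lam := le_trans hanorm hwa
      have hlampos : 0 < lam := by linarith
      refine ⟨tX.centerMass w (fun i => (z i).fst), ?_, ?_⟩
      · apply Finset.centerMass_mem_convexHull tX
          (fun i hi => hw0 i (Finset.filter_subset _ _ hi)) hlampos
        intro i hi
        rw [htX, Finset.mem_filter] at hi
        show (inlIso (z i).fst : WithLp 1 (X × Y)) ∈ Γ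
        rw [inlIso_apply, ← hi.2, eq_symm_mk]
        exact hz i hi.1
      · have hym : tX.centerMass w (fun i => (z i).fst) = lam⁻¹ • a := by
          rw [Finset.centerMass]
        have hdiff : ‖a - lam⁻¹ • a‖ ≤ 1 - lam := by
          have h1 : a - lam⁻¹ • a = (1 - lam⁻¹) • a := by
            rw [sub_smul, one_smul]
          rw [h1, norm_smul, Real.norm_eq_abs]
          have hinv : 1 ≤ lam⁻¹ := (one_le_inv₀ hlampos).2 hlam1
          rw [abs_of_nonpos (by linarith), neg_sub]
          calc (lam⁻¹ - 1) * ‖a‖ ≤ (lam⁻¹ - 1) * lam := by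
                apply mul_le_mul_of_nonneg_left hwa (by linarith)
            _ = 1 - lam := by field_simp
        rw [dist_eq_norm, hym]
        calc ‖x - lam⁻¹ • a‖ ≤ ‖x - c.fst‖ + ‖a - lam⁻¹ • a‖ := by
              have : x - lam⁻¹ • a = (x - c.fst) + (a - lam⁻¹ • a) := by rw [hfst]; abel
              rw [this]; exact norm_add_le _ _
          _ < ε' + (1 - lam) := by
              have : ‖a - lam⁻¹ • a‖ ≤ 1 - lam := hdiff
              linarith
          _ ≤ ε' + ε' := by linarith
          _ < ε := by linarith
    -- conclude
    apply Set.Subset.antisymm hsub1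
    obtain ⟨u, hu⟩ := exists_ne (0 : X)
    have hun : ‖(‖u‖⁻¹ • u : X)‖ = 1 := by
      rw [norm_smul, norm_inv, norm_norm, inv_mul_cancel₀ (norm_ne_zero_iff.2 hu)]
    have he : (‖u‖⁻¹ • u : X) ∈ closure (convexHull ℝ Δ) := hsphere _ hun
    have hne : (-(‖u‖⁻¹ • u) : X) ∈ closure (convexHull ℝ Δ) := by
      apply hsphere
      rw [norm_neg]; exact hun
    have h0 : (0:X) ∈ closure (convexHull ℝ Δ) := by
      have := hCconv he hne (by norm_num : (0:ℝ) ≤ 1/2) (by norm_num : (0:ℝ) ≤ 1/2) (by norm_num)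
      rwa [smul_neg, add_neg_cancel] at this
    intro x hx
    rw [Metric.mem_closedBall, dist_zero_right] at hx
    by_cases hx0 : x = 0
    · rw [hx0]; exact h0
    · have hxn : (0:ℝ) < ‖x‖ := norm_pos_iff.2 hx0
      have hxun : ‖(‖x‖⁻¹ • x : X)‖ = 1 := by
        rw [norm_smul, norm_inv, norm_norm, inv_mul_cancel₀ hxn.ne']
      have hmem := hCconv (hsphere _ hxun) h0
        (norm_nonneg x) (by linarith : (0:ℝ) ≤ 1 - ‖x‖) (by ring)
      rwa [smul_zero, add_zero, smul_inv_smul₀ hxn.ne'] at hmem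
end

section
/- Let M be a metric space and Y a Banach space. Let B be the set of all Lipschitz maps f : M → Y with ‖f‖_L > 0 for which there exist η > 0, points x ≠ y in M, and r > 0 such that the closed balls B(x,r) and B(y,r) are compact and disjoint, and ‖f(u)−f(v)‖ ≤ (‖f‖_L − η)·d(u,v) for all u ≠ v with (u,v) ∉ (B(x,r)×B(y,r)) ∪ (B(y,r)×B(x,r)). Then: (1) B is open with respect to the Lipschitz-constant distance, i.e. for every f ∈ B there is δ > 0 such that every Lipschitz g : M → Y with ‖f−g‖_L < δ belongs to B; (2) every f ∈ B strongly attains its norm at a pair (u,v) failing property (Z): there exist u ≠ v with ‖f(u)−f(v)‖ = ‖f‖_L·d(u,v) and ε₀ > 0 such that (u,v)_z ≥ ε₀·min{d(u,z),d(v,z)} for all z ∈ M \ {u,v}. -/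
/-- The least Lipschitz constant of a map between a metric space and a normed space,
defined as the supremum of the difference quotients. -/
noncomputable def lipNorm {M : Type*} [MetricSpace M] {Y : Type*} [NormedAddCommGroup Y]
    (f : M → Y) : ℝ :=
  sSup {r : ℝ | ∃ x y : M, x ≠ y ∧ r = ‖f x - f y‖ / dist x y}

/-- `f` is a Lipschitz map. -/
def IsLip {M : Type*} [MetricSpace M] {Y : Type*} [NormedAddCommGroup Y] (f : M → Y) : Prop :=
  ∃ K : NNReal, LipschitzWith K f

/-- Membership in the set `B`: `f` is a Lipschitz map with `‖f‖_L > 0` for which there are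
`η > 0`, points `x ≠ y` and `r > 0` such that the closed balls `B(x,r)`, `B(y,r)` are compact
and disjoint, and `‖f u - f v‖ ≤ (‖f‖_L - η) d(u,v)` whenever the pair `(u,v)` does not lie
in `(B(x,r) × B(y,r)) ∪ (B(y,r) × B(x,r))`. -/
def MemB {M : Type*} [MetricSpace M] {Y : Type*} [NormedAddCommGroup Y] (f : M → Y) : Prop :=
  IsLip f ∧ 0 < lipNorm f ∧
  ∃ η > (0 : ℝ), ∃ x y : M, x ≠ y ∧ ∃ r > (0 : ℝ),
    IsCompact (Metric.closedBall x r) ∧ IsCompact (Metric.closedBall y r) ∧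
    Disjoint (Metric.closedBall x r) (Metric.closedBall y r) ∧
    ∀ u v : M, u ≠ v →
      ¬((u ∈ Metric.closedBall x r ∧ v ∈ Metric.closedBall y r) ∨
        (u ∈ Metric.closedBall y r ∧ v ∈ Metric.closedBall x r)) →
      ‖f u - f v‖ ≤ (lipNorm f - η) * dist u v

section helpers
variable {M : Type*} [MetricSpace M] {Y : Type*} [NormedAddCommGroup Y]

lemma lipSet_bddAbove {f : M → Y} (hf : IsLip f) :
    BddAbove {r : ℝ | ∃ x y : M, x ≠ y ∧ r = ‖f x - f y‖ / dist x y} := by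
  obtain ⟨K, hK⟩ := hf
  refine ⟨K, ?_⟩
  rintro r ⟨a, b, hab, rfl⟩
  rw [div_le_iff₀ (dist_pos.2 hab)]
  calc ‖f a - f b‖ = dist (f a) (f b) := (dist_eq_norm _ _).symm
    _ ≤ K * dist a b := hK.dist_le_mul a b

lemma lipNorm_nonneg (f : M → Y) : 0 ≤ lipNorm f :=
  Real.sSup_nonneg (by rintro r ⟨a, b, hab, rfl⟩; positivity)

lemma norm_sub_le_lip {f : M → Y} (hf : IsLip f) (a b : M) :
    ‖f a - f b‖ ≤ lipNorm f * dist a b := by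
  rcases eq_or_ne a b with rfl | hab
  · simp
  · have h : ‖f a - f b‖ / dist a b ≤ lipNorm f :=
      le_csSup (lipSet_bddAbove hf) ⟨a, b, hab, rfl⟩
    rwa [div_le_iff₀ (dist_pos.2 hab)] at h

lemma lipNorm_le {f : M → Y} {c : ℝ} (hc : 0 ≤ c)
    (h : ∀ a b : M, a ≠ b → ‖f a - f b‖ ≤ c * dist a b) : lipNorm f ≤ c := by
  apply Real.sSup_le _ hc
  rintro r ⟨a, b, hab, rfl⟩
  rw [div_le_iff₀ (dist_pos.2 hab)]
  exact h a b hab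

end helpers

/-- The set `B` is open in the Lipschitz distance, and every member of `B` strongly attains
its norm at a pair failing property (Z). -/
theorem stmt_16 {M : Type*} [MetricSpace M]
    {Y : Type*} [NormedAddCommGroup Y] [NormedSpace ℝ Y] [CompleteSpace Y] :
    (∀ f : M → Y, MemB f → ∃ δ > (0 : ℝ), ∀ g : M → Y, IsLip g →
      lipNorm (fun p => f p - g p) < δ → MemB g) ∧
    (∀ f : M → Y, MemB f → ∃ u v : M, u ≠ v ∧ ‖f u - f v‖ = lipNorm f * dist u v ∧
      ∃ ε₀ > (0 : ℝ), ∀ z : M, z ≠ u → z ≠ v →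
        ε₀ * min (dist u z) (dist v z) ≤ (dist u z + dist v z - dist u v) / 2) := by
  constructor
  · -- Part 1: openness
    rintro f ⟨hfLip, hL, η, hη, x, y, hxy, r, hr, hcx, hcy, hdisj, hbnd⟩
    set δ : ℝ := min (η / 3) (lipNorm f / 2) with hδdef
    have hδpos : 0 < δ := lt_min (by linarith) (by linarith)
    refine ⟨δ, hδpos, ?_⟩
    intro g hgLip hD
    set D := lipNorm (fun p => f p - g p) with hDdef
    have hDnn : 0 ≤ D := lipNorm_nonneg _
    have hfg : IsLip (fun p => f p - g p) := by
      obtain ⟨Kf, hKf⟩ := hfLip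
      obtain ⟨Kg, hKg⟩ := hgLip
      exact ⟨Kf + Kg, hKf.sub hKg⟩
    have hfq : ∀ a b : M, ‖(f a - g a) - (f b - g b)‖ ≤ D * dist a b := by
      intro a b
      exact norm_sub_le_lip hfg a b
    have hgle : ∀ a b : M, ‖g a - g b‖ ≤ ‖f a - f b‖ + D * dist a b := by
      intro a b
      have e : g a - g b = (f a - f b) - ((f a - g a) - (f b - g b)) := by abel
      rw [e]
      calc ‖(f a - f b) - ((f a - g a) - (f b - g b))‖
          ≤ ‖f a - f b‖ + ‖(f a - g a) - (f b - g b)‖ := norm_sub_le _ _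
        _ ≤ ‖f a - f b‖ + D * dist a b := by linarith [hfq a b]
    have hfle : ∀ a b : M, ‖f a - f b‖ ≤ ‖g a - g b‖ + D * dist a b := by
      intro a b
      have e : f a - f b = (g a - g b) + ((f a - g a) - (f b - g b)) := by abel
      rw [e]
      calc ‖(g a - g b) + ((f a - g a) - (f b - g b))‖
          ≤ ‖g a - g b‖ + ‖(f a - g a) - (f b - g b)‖ := norm_add_le _ _
        _ ≤ ‖g a - g b‖ + D * dist a b := by linarith [hfq a b]
    have hgnn : 0 ≤ lipNorm g := lipNorm_nonneg _
    have hLg : lipNorm f ≤ lipNorm g + D := by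
      apply lipNorm_le (by linarith)
      intro a b hab
      calc ‖f a - f b‖ ≤ ‖g a - g b‖ + D * dist a b := hfle a b
        _ ≤ lipNorm g * dist a b + D * dist a b := by
            linarith [norm_sub_le_lip hgLip a b]
        _ = (lipNorm g + D) * dist a b := by ring
    have hδle : δ ≤ lipNorm f / 2 := min_le_right _ _
    have hδη : δ ≤ η / 3 := min_le_left _ _
    have hgpos : 0 < lipNorm g := by linarith
    refine ⟨hgLip, hgpos, η - 2 * δ, by linarith, x, y, hxy, r, hr, hcx, hcy, hdisj, ?_⟩
    intro u v huv hKp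
    have hd : (0 : ℝ) ≤ dist u v := dist_nonneg
    have hcoef : lipNorm f - η + D ≤ lipNorm g - (η - 2 * δ) := by linarith
    calc ‖g u - g v‖ ≤ ‖f u - f v‖ + D * dist u v := hgle u v
      _ ≤ (lipNorm f - η) * dist u v + D * dist u v := by
          linarith [hbnd u v huv hKp]
      _ = (lipNorm f - η + D) * dist u v := by ring
      _ ≤ (lipNorm g - (η - 2 * δ)) * dist u v :=
          mul_le_mul_of_nonneg_right hcoef hd
  · -- Part 2: strong attainment at a pair failing (Z)
    rintro f ⟨hfLip, hL, η, hη, x, y, hxy, r, hr, hcx, hcy, hdisj, hbnd⟩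
    set L := lipNorm f with hLdef
    obtain ⟨Kf, hKf⟩ := id hfLip
    set Bx := Metric.closedBall x r with hBx
    set By := Metric.closedBall y r with hBy
    set K : Set (M × M) := Bx ×ˢ By with hKdef
    have hKc : IsCompact K := hcx.prod hcy
    have hKne : K.Nonempty :=
      ⟨(x, y), ⟨Metric.mem_closedBall_self hr.le, Metric.mem_closedBall_self hr.le⟩⟩
    have hKne' : ∀ p : M × M, p ∈ K → p.1 ≠ p.2 := by
      rintro p hp rfl2
      exact Set.disjoint_left.mp hdisj hp.1 (rfl2 ▸ hp.2)
    set φ : M × M → ℝ := fun p => ‖f p.1 - f p.2‖ / dist p.1 p.2 with hφdef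
    have hφcont : ContinuousOn φ K := by
      apply ContinuousOn.div
      · exact (((hKf.continuous.comp continuous_fst).sub
          (hKf.continuous.comp continuous_snd)).norm).continuousOn
      · exact continuous_dist.continuousOn
      · intro p hp
        exact dist_ne_zero.2 (hKne' p hp)
    obtain ⟨p, hpK, hmax⟩ := hKc.exists_isMaxOn hKne hφcont
    have hu : p.1 ∈ Bx := hpK.1
    have hv : p.2 ∈ By := hpK.2
    have huv : p.1 ≠ p.2 := hKne' p hpK
    have hdpos : 0 < dist p.1 p.2 := dist_pos.2 huv
    have hφnn : 0 ≤ φ p := by positivity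
    -- φ p ≤ L
    have hφle : φ p ≤ L := le_csSup (lipSet_bddAbove hfLip) ⟨p.1, p.2, huv, rfl⟩
    -- L ≤ max (φ p) (L - η)
    have hLle : L ≤ max (φ p) (L - η) := by
      rw [hLdef, lipNorm]
      apply Real.sSup_le _ (le_max_of_le_left hφnn)
      rintro s ⟨a, b, hab, rfl⟩
      by_cases hcase : (a ∈ Bx ∧ b ∈ By) ∨ (a ∈ By ∧ b ∈ Bx)
      · rcases hcase with ⟨ha, hb⟩ | ⟨ha, hb⟩
        · have h5 : φ (a, b) ≤ φ p := hmax (⟨ha, hb⟩ : (a, b) ∈ K)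
          exact le_max_of_le_left h5
        · have : ‖f a - f b‖ / dist a b = φ (b, a) := by
            simp only [hφdef, norm_sub_rev (f a), dist_comm a b]
          rw [this]
          have h5 : φ (b, a) ≤ φ p := hmax (⟨hb, ha⟩ : (b, a) ∈ K)
          exact le_max_of_le_left h5
      · apply le_max_of_le_right
        rw [div_le_iff₀ (dist_pos.2 hab)]
        exact hbnd a b hab hcase
    have hLφ : L ≤ φ p := by
      rcases le_max_iff.mp hLle with h | h
      · exact h
      · linarith
    have hφL : φ p = L := le_antisymm hφle hLφ
    have hattain : ‖f p.1 - f p.2‖ = L * dist p.1 p.2 := by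
      have := hφL
      rw [hφdef] at this
      field_simp at this
      linarith [this]
    refine ⟨p.1, p.2, huv, hattain, η / (2 * L), by positivity, ?_⟩
    intro z hzu hzv
    set duz := dist p.1 z with hduz
    set dvz := dist p.2 z with hdvz
    set m := min duz dvz with hm
    have hm1 : m ≤ duz := min_le_left _ _
    have hm2 : m ≤ dvz := min_le_right _ _
    have hmnn : 0 ≤ m := le_min dist_nonneg dist_nonneg
    have htri : dist p.1 p.2 ≤ duz + dvz := by
      calc dist p.1 p.2 ≤ dist p.1 z + dist z p.2 := dist_triangle _ _ _
        _ = duz + dvz := by rw [dist_comm z p.2]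
    have hsplit : ‖f p.1 - f p.2‖ ≤ ‖f p.1 - f z‖ + ‖f p.2 - f z‖ := by
      have e : f p.1 - f p.2 = (f p.1 - f z) - (f p.2 - f z) := by abel
      rw [e]; exact norm_sub_le _ _
    -- key inequality in all cases
    have key : η * m ≤ L * (duz + dvz - dist p.1 p.2) := by
      by_cases hzBy : z ∈ By
      · -- pair (p.2, z) is not a K-pair
        have hnk : ¬((p.2 ∈ Bx ∧ z ∈ By) ∨ (p.2 ∈ By ∧ z ∈ Bx)) := by
          rintro (⟨hvx, -⟩ | ⟨-, hzx⟩)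
          · exact Set.disjoint_left.mp hdisj hvx hv
          · exact Set.disjoint_left.mp hdisj hzx hzBy
        have h1 : ‖f p.2 - f z‖ ≤ (L - η) * dvz := hbnd p.2 z (Ne.symm hzv) hnk
        have h2 : ‖f p.1 - f z‖ ≤ L * duz := norm_sub_le_lip hfLip p.1 z
        have h4 : η * m ≤ η * dvz := mul_le_mul_of_nonneg_left hm2 hη.le
        nlinarith [hsplit, hattain]
      · by_cases hzBx : z ∈ Bx
        · -- pair (p.1, z) is not a K-pair
          have hnk : ¬((p.1 ∈ Bx ∧ z ∈ By) ∨ (p.1 ∈ By ∧ z ∈ Bx)) := by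
            rintro (⟨-, hzy⟩ | ⟨huy, -⟩)
            · exact Set.disjoint_left.mp hdisj hzBx hzy
            · exact Set.disjoint_left.mp hdisj hu huy
          have h1 : ‖f p.1 - f z‖ ≤ (L - η) * duz := hbnd p.1 z (Ne.symm hzu) hnk
          have h2 : ‖f p.2 - f z‖ ≤ L * dvz := norm_sub_le_lip hfLip p.2 z
          have h4 : η * m ≤ η * duz := mul_le_mul_of_nonneg_left hm1 hη.le
          nlinarith [hsplit, hattain]
        · -- neither pair is a K-pair
          have hnk1 : ¬((p.1 ∈ Bx ∧ z ∈ By) ∨ (p.1 ∈ By ∧ z ∈ Bx)) := by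
            rintro (⟨-, hzy⟩ | ⟨-, hzx⟩)
            · exact hzBy hzy
            · exact hzBx hzx
          have hnk2 : ¬((p.2 ∈ Bx ∧ z ∈ By) ∨ (p.2 ∈ By ∧ z ∈ Bx)) := by
            rintro (⟨-, hzy⟩ | ⟨-, hzx⟩)
            · exact hzBy hzy
            · exact hzBx hzx
          have h1 : ‖f p.1 - f z‖ ≤ (L - η) * duz := hbnd p.1 z (Ne.symm hzu) hnk1
          have h2 : ‖f p.2 - f z‖ ≤ (L - η) * dvz := hbnd p.2 z (Ne.symm hzv) hnk2
          have h4a : η * m ≤ η * duz := mul_le_mul_of_nonneg_left hm1 hη.le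
          have h4b : η * m ≤ η * dvz := mul_le_mul_of_nonneg_left hm2 hη.le
          have hmnn' : 0 ≤ η * m := mul_nonneg hη.le hmnn
          nlinarith [hsplit, hattain]
    -- finish
    rw [div_mul_eq_mul_div, div_le_div_iff₀ (by positivity) (by norm_num)]
    nlinarith [key]
end

section
/- Let X be a Banach space with property α. Then for every Banach space Y ≠ {0}, the set of absolutely strongly exposing operators from X to Y is dense in the space L(X,Y) of bounded linear operators with the operator norm. -/
open Filter Topology

/-- Property α of a normed space `X`: there are a symmetric family of unit vectors `(x l)`,
norm-one functionals `(φ l)` with `|φ l (x l)| = 1`, and a constant `0 ≤ ρ < 1` with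
`|φ l (x m)| ≤ ρ` whenever `x l ≠ ± x m`, such that the closed convex hull of the `x l`
equals the closed unit ball. -/
def PropAlpha (X : Type*) [NormedAddCommGroup X] [NormedSpace ℝ X] : Prop :=
  ∃ (Λ : Type) (x : Λ → X) (φ : Λ → X →L[ℝ] ℝ) (ρ : ℝ),
    0 ≤ ρ ∧ ρ < 1 ∧
    (∀ l : Λ, ∃ m : Λ, x m = -x l) ∧
    (∀ l : Λ, ‖x l‖ = 1 ∧ ‖φ l‖ = 1 ∧ |φ l (x l)| = 1) ∧
    (∀ l m : Λ, x l ≠ x m → x l ≠ -x m → |φ l (x m)| ≤ ρ) ∧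
    closure (convexHull ℝ (Set.range x)) = Metric.closedBall (0 : X) 1

/-- If the closed convex hull of the range of `x` is the closed unit ball and `‖S (x l)‖ ≤ C`
for all `l`, then `‖S‖ ≤ C`. -/
private lemma norm_op_le_of_hull {X Y : Type*} [NormedAddCommGroup X] [NormedSpace ℝ X]
    [NormedAddCommGroup Y] [NormedSpace ℝ Y] {Λ : Type} {x : Λ → X}
    (hball : closure (convexHull ℝ (Set.range x)) = Metric.closedBall (0 : X) 1)
    (S : X →L[ℝ] Y) {C : ℝ} (hC : 0 ≤ C) (h : ∀ l, ‖S (x l)‖ ≤ C) : ‖S‖ ≤ C := by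
  have hsub : Metric.closedBall (0:X) 1 ⊆ {v | ‖S v‖ ≤ C} := by
    rw [← hball]
    refine closure_minimal (convexHull_min ?_ ?_) ?_
    · rintro _ ⟨l, rfl⟩; exact h l
    · intro a ha b hb p q hp hq hpq
      simp only [Set.mem_setOf_eq] at ha hb ⊢
      calc ‖S (p • a + q • b)‖ = ‖p • S a + q • S b‖ := by
            rw [map_add, map_smul, map_smul]
        _ ≤ ‖p • S a‖ + ‖q • S b‖ := norm_add_le _ _
        _ = p * ‖S a‖ + q * ‖S b‖ := by
            rw [norm_smul, norm_smul, Real.norm_eq_abs, Real.norm_eq_abs,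
              abs_of_nonneg hp, abs_of_nonneg hq]
        _ ≤ p * C + q * C :=
            add_le_add (mul_le_mul_of_nonneg_left ha hp) (mul_le_mul_of_nonneg_left hb hq)
        _ = C := by rw [← add_mul, hpq, one_mul]
    · exact isClosed_le (continuous_norm.comp S.continuous) continuous_const
  refine ContinuousLinearMap.opNorm_le_of_unit_norm hC fun v hv => ?_
  exact hsub (by simp [Metric.mem_closedBall, dist_zero_right, hv])

set_option maxHeartbeats 2000000 in
/-- If a Banach space `X` has property α, then for every nonzero Banach space `Y` the
absolutely strongly exposing operators are dense in `L(X,Y)`. -/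
theorem stmt_17 {X : Type*} [NormedAddCommGroup X] [NormedSpace ℝ X] [CompleteSpace X]
    (hX : PropAlpha X)
    {Y : Type*} [NormedAddCommGroup Y] [NormedSpace ℝ Y] [CompleteSpace Y] [Nontrivial Y]
    (T : X →L[ℝ] Y) (ε : ℝ) (hε : 0 < ε) :
    ∃ S : X →L[ℝ] Y, AbsStronglyExposing S ∧ ‖T - S‖ < ε := by
  obtain ⟨Λ, x, φ, ρ, hρ0, hρ1, hsym, hnorm, hsep, hball⟩ := hX
  have hΛ : Nonempty Λ := by
    by_contra h
    rw [not_nonempty_iff] at h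
    rw [Set.range_eq_empty x, convexHull_empty, closure_empty] at hball
    have h0 : (0:X) ∈ Metric.closedBall (0:X) 1 := Metric.mem_closedBall_self zero_le_one
    rw [← hball] at h0
    exact h0
  obtain ⟨η, hηdef⟩ : ∃ η : ℝ, η = ε / 2 := ⟨_, rfl⟩
  have hη : 0 < η := by rw [hηdef]; linarith
  obtain ⟨l₀, hl₀⟩ : ∃ l₀, ‖T‖ - η * (1 - ρ) / 2 < ‖T (x l₀)‖ := by
    by_contra h
    push_neg at h
    rcases le_or_gt 0 (‖T‖ - η * (1 - ρ) / 2) with h0 | h0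
    · have hTle := norm_op_le_of_hull hball T h0 h
      nlinarith [mul_pos hη (by linarith : (0:ℝ) < 1 - ρ)]
    · have := h (Classical.arbitrary Λ)
      nlinarith [norm_nonneg (T (x (Classical.arbitrary Λ)))]
  obtain ⟨x₀, hx₀def⟩ : ∃ v : X, v = x l₀ := ⟨_, rfl⟩
  rw [← hx₀def] at hl₀
  have hx₀ : ‖x₀‖ = 1 := by rw [hx₀def]; exact (hnorm l₀).1
  have hφn : ‖φ l₀‖ = 1 := (hnorm l₀).2.1
  have habs : |φ l₀ x₀| = 1 := by rw [hx₀def]; exact (hnorm l₀).2.2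
  obtain ⟨c, hcdef⟩ : ∃ c : ℝ, c = φ l₀ x₀ := ⟨_, rfl⟩
  have hc1 : |c| = 1 := by rw [hcdef]; exact habs
  have hs : c * c = 1 := by
    rcases (abs_eq zero_le_one).mp hc1 with h | h <;> rw [h] <;> ring
  have hsep' : ∀ l, x l ≠ x₀ → x l ≠ -x₀ → |φ l₀ (x l)| ≤ ρ := by
    intro l h1 h2
    rw [hx₀def] at h1 h2
    exact hsep l₀ l (Ne.symm h1) (fun h => h2 (by rw [h, neg_neg]))
  obtain ⟨w, hw1, hw2⟩ : ∃ w : Y, ‖w‖ = 1 ∧ ‖T x₀ + η • w‖ = ‖T x₀‖ + η := by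
    by_cases hT0 : T x₀ = 0
    · obtain ⟨y, hy⟩ := exists_ne (0 : Y)
      refine ⟨‖y‖⁻¹ • y, ?_, ?_⟩
      · rw [norm_smul, norm_inv, norm_norm, inv_mul_cancel₀ (norm_ne_zero_iff.mpr hy)]
      · rw [hT0, zero_add, norm_zero, zero_add, norm_smul, Real.norm_eq_abs, abs_of_pos hη,
          norm_smul, norm_inv, norm_norm, inv_mul_cancel₀ (norm_ne_zero_iff.mpr hy), mul_one]
    · refine ⟨‖T x₀‖⁻¹ • T x₀, ?_, ?_⟩
      · rw [norm_smul, norm_inv, norm_norm, inv_mul_cancel₀ (norm_ne_zero_iff.mpr hT0)]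
      · have h0 : (0:ℝ) < ‖T x₀‖ := norm_pos_iff.mpr hT0
        have heq : T x₀ + η • ‖T x₀‖⁻¹ • T x₀ = (1 + η * ‖T x₀‖⁻¹) • T x₀ := by
          rw [add_smul, one_smul, mul_smul]
        have hp : (0:ℝ) < 1 + η * ‖T x₀‖⁻¹ := by
          have := mul_pos hη (inv_pos.mpr h0)
          linarith
        rw [heq, norm_smul, Real.norm_eq_abs, abs_of_pos hp]
        field_simp
  obtain ⟨S, hSdef⟩ : ∃ S : X →L[ℝ] Y, S = T + (φ l₀).smulRight ((η * c) • w) := ⟨_, rfl⟩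
  have hSapp : ∀ v, S v = T v + (φ l₀ v * (η * c)) • w := by
    intro v
    rw [hSdef]
    simp [ContinuousLinearMap.smulRight_apply, smul_smul]
  have hSx₀ : S x₀ = T x₀ + η • w := by
    rw [hSapp, ← hcdef]
    congr 1
    rw [show c * (η * c) = η * (c * c) by ring, hs, mul_one]
  obtain ⟨M, hMdef⟩ : ∃ M : ℝ, M = ‖T x₀‖ + η := ⟨_, rfl⟩
  have hM0 : 0 < M := by
    rw [hMdef]
    have h := norm_nonneg (T x₀)
    linarith
  have hSx₀n : ‖S x₀‖ = M := by rw [hSx₀, hw2, hMdef]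
  obtain ⟨M', hM'def⟩ : ∃ M' : ℝ, M' = ‖T‖ + η * ρ := ⟨_, rfl⟩
  have hM'0 : 0 ≤ M' := by
    rw [hM'def]
    exact add_nonneg (norm_nonneg T) (mul_nonneg hη.le hρ0)
  have hgap : M' < M := by rw [hM'def, hMdef]; nlinarith [hl₀]
  obtain ⟨g, hgdef⟩ : ∃ g : ℝ, g = M - M' := ⟨_, rfl⟩
  have hg : 0 < g := by rw [hgdef]; linarith
  have hSother : ∀ l, x l ≠ x₀ → x l ≠ -x₀ → ‖S (x l)‖ ≤ M' := by
    intro l h1 h2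
    rw [hM'def]
    calc ‖S (x l)‖ ≤ ‖T (x l)‖ + ‖(φ l₀ (x l) * (η * c)) • w‖ := by
          rw [hSapp]; exact norm_add_le _ _
      _ ≤ ‖T‖ + η * ρ := by
          refine add_le_add ?_ ?_
          · calc ‖T (x l)‖ ≤ ‖T‖ * ‖x l‖ := T.le_opNorm _
              _ = ‖T‖ := by rw [(hnorm l).1, mul_one]
          · rw [norm_smul, hw1, mul_one, Real.norm_eq_abs]
            calc |φ l₀ (x l) * (η * c)| = |φ l₀ (x l)| * (|η| * |c|) := by
                  rw [abs_mul, abs_mul]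
              _ = |φ l₀ (x l)| * η := by rw [hc1, abs_of_pos hη, mul_one]
              _ ≤ ρ * η := mul_le_mul_of_nonneg_right (hsep' l h1 h2) hη.le
              _ = η * ρ := mul_comm _ _
  have hSall : ∀ l, ‖S (x l)‖ ≤ M := by
    intro l
    by_cases h1 : x l = x₀
    · rw [h1, hSx₀n]
    by_cases h2 : x l = -x₀
    · rw [h2, map_neg, norm_neg, hSx₀n]
    · exact le_of_lt (lt_of_le_of_lt (hSother l h1 h2) hgap)
  have hSnorm : ‖S‖ = M := by
    refine le_antisymm (norm_op_le_of_hull hball S hM0.le hSall) ?_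
    calc M = ‖S x₀‖ := hSx₀n.symm
      _ ≤ ‖S‖ := S.unit_le_opNorm x₀ (le_of_eq hx₀)
  have hP : convexHull ℝ (Set.range x) ⊆
      {v | ∃ α β : ℝ, 0 ≤ α ∧ 0 ≤ β ∧ α + β ≤ 1 ∧
        ‖v - (α - β) • x₀‖ ≤ 1 - (α + β) ∧
        ‖S v - (α - β) • S x₀‖ ≤ (1 - (α + β)) * M'} := by
    refine convexHull_min ?_ ?_
    · rintro _ ⟨l, rfl⟩
      simp only [Set.mem_setOf_eq]
      by_cases h1 : x l = x₀
      · refine ⟨1, 0, zero_le_one, le_refl 0, by norm_num, ?_, ?_⟩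
        · have e : x l - ((1:ℝ) - 0) • x₀ = 0 := by rw [h1]; module
          rw [e, norm_zero]; norm_num
        · have e : S (x l) - ((1:ℝ) - 0) • S x₀ = 0 := by rw [h1]; module
          rw [e, norm_zero]; norm_num
      by_cases h2 : x l = -x₀
      · refine ⟨0, 1, le_refl 0, zero_le_one, by norm_num, ?_, ?_⟩
        · have e : x l - ((0:ℝ) - 1) • x₀ = 0 := by rw [h2]; module
          rw [e, norm_zero]; norm_num
        · have e : S (x l) - ((0:ℝ) - 1) • S x₀ = 0 := by rw [h2, map_neg]; module
          rw [e, norm_zero]; norm_num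
      · refine ⟨0, 0, le_refl 0, le_refl 0, by norm_num, ?_, ?_⟩
        · have e : x l - ((0:ℝ) - 0) • x₀ = x l := by module
          rw [e, (hnorm l).1]; norm_num
        · have e : S (x l) - ((0:ℝ) - 0) • S x₀ = S (x l) := by module
          rw [e]
          calc ‖S (x l)‖ ≤ M' := hSother l h1 h2
            _ = (1 - (0 + 0)) * M' := by ring
    · rintro v₁ hv₁ v₂ hv₂ a b ha hb hab
      simp only [Set.mem_setOf_eq] at hv₁ hv₂ ⊢
      obtain ⟨α₁, β₁, hα₁, hβ₁, hc₁, hd₁, he₁⟩ := hv₁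
      obtain ⟨α₂, β₂, hα₂, hβ₂, hc₂, hd₂, he₂⟩ := hv₂
      refine ⟨a*α₁+b*α₂, a*β₁+b*β₂,
        add_nonneg (mul_nonneg ha hα₁) (mul_nonneg hb hα₂),
        add_nonneg (mul_nonneg ha hβ₁) (mul_nonneg hb hβ₂), ?_, ?_, ?_⟩
      · have k1 := mul_le_mul_of_nonneg_left hc₁ ha
        have k2 := mul_le_mul_of_nonneg_left hc₂ hb
        nlinarith
      · have heq : (a•v₁+b•v₂) - ((a*α₁+b*α₂)-(a*β₁+b*β₂))•x₀
            = a•(v₁-(α₁-β₁)•x₀) + b•(v₂-(α₂-β₂)•x₀) := by module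
        rw [heq]
        calc ‖a•(v₁-(α₁-β₁)•x₀) + b•(v₂-(α₂-β₂)•x₀)‖
            ≤ ‖a•(v₁-(α₁-β₁)•x₀)‖ + ‖b•(v₂-(α₂-β₂)•x₀)‖ := norm_add_le _ _
          _ = a*‖v₁-(α₁-β₁)•x₀‖ + b*‖v₂-(α₂-β₂)•x₀‖ := by
              rw [norm_smul, norm_smul, Real.norm_eq_abs, Real.norm_eq_abs,
                abs_of_nonneg ha, abs_of_nonneg hb]
          _ ≤ a*(1-(α₁+β₁)) + b*(1-(α₂+β₂)) :=
              add_le_add (mul_le_mul_of_nonneg_left hd₁ ha)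
                (mul_le_mul_of_nonneg_left hd₂ hb)
          _ = 1 - ((a*α₁+b*α₂)+(a*β₁+b*β₂)) := by linear_combination hab
      · have heq : S (a•v₁+b•v₂) - ((a*α₁+b*α₂)-(a*β₁+b*β₂))•(S x₀)
            = a•(S v₁-(α₁-β₁)•S x₀) + b•(S v₂-(α₂-β₂)•S x₀) := by
          rw [map_add, map_smul, map_smul]; module
        rw [heq]
        calc ‖a•(S v₁-(α₁-β₁)•S x₀) + b•(S v₂-(α₂-β₂)•S x₀)‖
            ≤ ‖a•(S v₁-(α₁-β₁)•S x₀)‖ + ‖b•(S v₂-(α₂-β₂)•S x₀)‖ := norm_add_le _ _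
          _ = a*‖S v₁-(α₁-β₁)•S x₀‖ + b*‖S v₂-(α₂-β₂)•S x₀‖ := by
              rw [norm_smul, norm_smul, Real.norm_eq_abs, Real.norm_eq_abs,
                abs_of_nonneg ha, abs_of_nonneg hb]
          _ ≤ a*((1-(α₁+β₁))*M') + b*((1-(α₂+β₂))*M') :=
              add_le_add (mul_le_mul_of_nonneg_left he₁ ha)
                (mul_le_mul_of_nonneg_left he₂ hb)
          _ = (1 - ((a*α₁+b*α₂)+(a*β₁+b*β₂))) * M' := by linear_combination M' * hab
  have hkey : ∀ u : X, ‖u‖ ≤ 1 → min ‖u - x₀‖ ‖u + x₀‖ ≤ 2 * (M - ‖S u‖) / g := by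
    intro u hu
    refine le_of_forall_pos_le_add fun ε' hε' => ?_
    have hgM : 0 < 1 + 2 * M / g := by
      have h2 : (0:ℝ) ≤ 2 * M / g := div_nonneg (by linarith) hg.le
      linarith
    obtain ⟨ζ, hζdef⟩ : ∃ ζ : ℝ, ζ = ε' / (1 + 2 * M / g) := ⟨_, rfl⟩
    have hζ : 0 < ζ := by rw [hζdef]; exact div_pos hε' hgM
    have humem : u ∈ closure (convexHull ℝ (Set.range x)) := by
      rw [hball]
      simpa [Metric.mem_closedBall, dist_zero_right] using hu
    obtain ⟨v, hvmem, hvd⟩ := Metric.mem_closure_iff.mp humem ζ hζ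
    rw [dist_eq_norm] at hvd
    obtain ⟨α, β, hα, hβ, hc₁, hd, he⟩ := hP hvmem
    obtain ⟨Δ, hΔdef⟩ : ∃ d : ℝ, d = α - β := ⟨_, rfl⟩
    rw [← hΔdef] at hd he
    have hΔc : |Δ| ≤ α + β := by
      rw [hΔdef]
      exact abs_le.mpr ⟨by linarith, by linarith⟩
    have hvle : ‖v‖ ≤ 1 := by
      calc ‖v‖ = ‖(v - Δ•x₀) + Δ•x₀‖ := by rw [sub_add_cancel]
        _ ≤ ‖v - Δ•x₀‖ + ‖Δ•x₀‖ := norm_add_le _ _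
        _ ≤ (1-(α+β)) + |Δ| := by
            refine add_le_add hd ?_
            rw [norm_smul, Real.norm_eq_abs, hx₀, mul_one]
        _ ≤ 1 := by linarith
    have hSv_le : ‖S v‖ ≤ M := by rw [← hSnorm]; exact S.unit_le_opNorm v hvle
    have hchain : ‖S v‖ ≤ (1-(α+β))*M' + |Δ| * M := by
      calc ‖S v‖ = ‖(S v - Δ•S x₀) + Δ•S x₀‖ := by rw [sub_add_cancel]
        _ ≤ ‖S v - Δ•S x₀‖ + ‖Δ•S x₀‖ := norm_add_le _ _
        _ ≤ (1-(α+β))*M' + |Δ| * M := by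
            refine add_le_add he ?_
            rw [norm_smul, Real.norm_eq_abs, hSx₀n]
    have hΔ1 : |Δ| ≤ 1 := le_trans hΔc hc₁
    have h1Δ : 1 - |Δ| ≤ (M - ‖S v‖) / g := by
      rw [le_div_iff₀ hg, hgdef]
      nlinarith [mul_nonneg (by linarith : (0:ℝ) ≤ α + β - |Δ|) hM'0]
    have h1c : 1 - (α+β) ≤ (M - ‖S v‖) / g := le_trans (by linarith) h1Δ
    obtain ⟨s0, hs0def⟩ : ∃ t : ℝ, t = if 0 ≤ Δ then (1:ℝ) else -1 := ⟨_, rfl⟩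
    have hΔs0 : |Δ - s0| = 1 - |Δ| := by
      rw [hs0def]
      split_ifs with h
      · rw [abs_of_nonpos (by linarith [le_abs_self Δ] : Δ - 1 ≤ 0), abs_of_nonneg h]
        ring
      · push_neg at h
        rw [abs_of_nonneg (by linarith [neg_abs_le Δ] : (0:ℝ) ≤ Δ - -1), abs_of_neg h]
        ring
    have hvs0 : ‖v - s0 • x₀‖ ≤ 2 * (M - ‖S v‖) / g := by
      calc ‖v - s0•x₀‖ = ‖(v - Δ•x₀) + (Δ - s0)•x₀‖ := by
            congr 1
            module
        _ ≤ ‖v - Δ•x₀‖ + ‖(Δ-s0)•x₀‖ := norm_add_le _ _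
        _ ≤ (1-(α+β)) + (1-|Δ|) := by
            refine add_le_add hd ?_
            rw [norm_smul, Real.norm_eq_abs, hx₀, mul_one, hΔs0]
        _ ≤ (M - ‖S v‖)/g + (M - ‖S v‖)/g := add_le_add h1c h1Δ
        _ = 2 * (M - ‖S v‖) / g := by ring
    have hmin : min ‖u - x₀‖ ‖u + x₀‖ ≤ ‖u - s0 • x₀‖ := by
      rw [hs0def]
      split_ifs
      · rw [one_smul]; exact min_le_left _ _
      · have hux : u - (-1:ℝ)•x₀ = u + x₀ := by module
        rw [hux]; exact min_le_right _ _
    have hδu : M - ‖S v‖ ≤ (M - ‖S u‖) + M * ζ := by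
      have hd1 : ‖S u‖ - ‖S v‖ ≤ M * ζ := by
        calc ‖S u‖ - ‖S v‖ ≤ ‖S u - S v‖ := norm_sub_norm_le _ _
          _ = ‖S (u - v)‖ := by rw [map_sub]
          _ ≤ ‖S‖ * ‖u - v‖ := S.le_opNorm _
          _ ≤ M * ζ := by
              rw [hSnorm]
              exact mul_le_mul_of_nonneg_left hvd.le hM0.le
      linarith
    calc min ‖u - x₀‖ ‖u + x₀‖ ≤ ‖u - s0•x₀‖ := hmin
      _ ≤ ‖u - v‖ + ‖v - s0•x₀‖ := by
          have huv : u - s0•x₀ = (u-v) + (v - s0•x₀) := by abel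
          rw [huv]; exact norm_add_le _ _
      _ ≤ ζ + 2 * (M - ‖S v‖) / g := add_le_add hvd.le hvs0
      _ ≤ ζ + 2 * ((M - ‖S u‖) + M * ζ) / g := by
          have h2 : 2 * (M - ‖S v‖) ≤ 2 * ((M - ‖S u‖) + M * ζ) := by linarith
          exact add_le_add_right ((div_le_div_iff_of_pos_right hg).mpr h2) ζ
      _ = 2 * (M - ‖S u‖) / g + ζ * (1 + 2 * M / g) := by
          field_simp
          ring
      _ = 2 * (M - ‖S u‖) / g + ε' := by
          rw [hζdef, div_mul_cancel₀ _ hgM.ne']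
  refine ⟨S, ⟨x₀, hx₀, ?_⟩, ?_⟩
  · intro u hu hT
    rw [hSnorm] at hT
    have hm : Tendsto (fun n => min ‖u n - x₀‖ ‖u n + x₀‖) atTop (𝓝 0) := by
      have hb' : Tendsto (fun n => 2 * (M - ‖S (u n)‖) / g) atTop (𝓝 (2 * (M - M) / g)) :=
        ((tendsto_const_nhds.sub hT).const_mul 2).div_const g
      have hb : Tendsto (fun n => 2 * (M - ‖S (u n)‖) / g) atTop (𝓝 0) := by
        simpa using hb'
      exact squeeze_zero (fun n => le_min (norm_nonneg _) (norm_nonneg _))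
        (fun n => hkey (u n) (hu n)) hb
    by_cases hfreq : ∃ᶠ n in atTop, ‖u n - x₀‖ ≤ ‖u n + x₀‖
    · obtain ⟨σ, hσ, hσ'⟩ := extraction_of_frequently_atTop hfreq
      refine ⟨σ, hσ, Or.inl ?_⟩
      rw [tendsto_iff_norm_sub_tendsto_zero]
      refine squeeze_zero (fun k => norm_nonneg _) (fun k => ?_) (hm.comp hσ.tendsto_atTop)
      exact le_min le_rfl (hσ' k)
    · have hev : ∀ᶠ n in atTop, ‖u n + x₀‖ ≤ ‖u n - x₀‖ := by
        have hnf := Filter.not_frequently.mp hfreq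
        filter_upwards [hnf] with n hn
        exact le_of_lt (not_le.mp hn)
      obtain ⟨σ, hσ, hσ'⟩ := extraction_of_frequently_atTop hev.frequently
      refine ⟨σ, hσ, Or.inr ?_⟩
      rw [tendsto_iff_norm_sub_tendsto_zero]
      refine squeeze_zero (fun k => norm_nonneg _) (fun k => ?_) (hm.comp hσ.tendsto_atTop)
      have hsn : u (σ k) - -x₀ = u (σ k) + x₀ := by abel
      rw [hsn]
      exact le_min (hσ' k) le_rfl
  · have hTS : T - S = -((φ l₀).smulRight ((η * c) • w)) := by rw [hSdef]; abel
    rw [hTS, norm_neg, ContinuousLinearMap.norm_smulRight_apply, hφn, one_mul, norm_smul,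
      Real.norm_eq_abs, abs_mul, hc1, mul_one, abs_of_pos hη, hw1, mul_one, hηdef]
    linarith
end

section
/- Let X be a Banach space whose unit sphere contains a uniformly strongly exposed set S with closed convex hull equal to B_X. Then for every Banach space Y ≠ {0}, the set of absolutely strongly exposing operators from X to Y is dense in the space L(X,Y) of bounded linear operators with the operator norm. -/
open Filter Topology

set_option maxHeartbeats 2000000 in
/-- If the unit sphere of a Banach space `X` contains a uniformly strongly exposed set `S`
whose closed convex hull is `B_X`, then for every nonzero Banach space `Y` the absolutely
strongly exposing operators are dense in `L(X,Y)`. -/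
theorem stmt_19 {X : Type*} [NormedAddCommGroup X] [NormedSpace ℝ X] [CompleteSpace X]
    (S : Set X) (hS : UnifStronglyExposed S)
    (hull : closure (convexHull ℝ S) = Metric.closedBall (0 : X) 1)
    {Y : Type*} [NormedAddCommGroup Y] [NormedSpace ℝ Y] [CompleteSpace Y] [Nontrivial Y]
    (T : X →L[ℝ] Y) (ε : ℝ) (hε : 0 < ε) :
    ∃ S' : X →L[ℝ] Y, AbsStronglyExposing S' ∧ ‖T - S'‖ < ε := by
  classical
  obtain ⟨hSph, F, hF, hδu⟩ := hS
  obtain ⟨v, hv⟩ := exists_ne (0 : Y)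
  set dir : Y → Y := fun w => if w = 0 then (‖v‖⁻¹ : ℝ) • v else (‖w‖⁻¹ : ℝ) • w with hdirdef
  have hdir1 : ∀ w, ‖dir w‖ = 1 := by
    intro w
    by_cases h : w = 0
    · simp only [dir, h, if_pos rfl]
      rw [norm_smul, Real.norm_eq_abs, abs_of_nonneg (inv_nonneg.2 (norm_nonneg v)),
        inv_mul_cancel₀ (norm_ne_zero_iff.2 hv)]
    · simp only [dir, if_neg h]
      rw [norm_smul, Real.norm_eq_abs, abs_of_nonneg (inv_nonneg.2 (norm_nonneg w)),
        inv_mul_cancel₀ (norm_ne_zero_iff.2 h)]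
  have hdir2 : ∀ (w : Y) (b : ℝ), 0 ≤ b → ‖w + b • dir w‖ = ‖w‖ + b := by
    intro w b hb
    by_cases h : w = 0
    · simp only [dir, h, if_pos rfl, norm_zero, zero_add, norm_smul]
      rw [Real.norm_eq_abs b, abs_of_nonneg hb, Real.norm_eq_abs,
        abs_of_nonneg (inv_nonneg.2 (norm_nonneg v)),
        inv_mul_cancel₀ (norm_ne_zero_iff.2 hv), mul_one]
    · have hw : (0:ℝ) < ‖w‖ := norm_pos_iff.2 h
      simp only [dir, if_neg h]
      have h1 : w + b • ((‖w‖⁻¹ : ℝ) • w) = (1 + b * ‖w‖⁻¹) • w := by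
        rw [smul_smul, add_smul, one_smul]
      rw [h1, norm_smul, Real.norm_eq_abs, abs_of_nonneg (by positivity)]
      field_simp
  clear_value dir
  -- the sup of ‖U x‖ over S is ‖U‖
  have hsup : ∀ (U : X →L[ℝ] Y) (ρ : ℝ), 0 < ρ → ∃ x, x ∈ S ∧ ‖U‖ - ρ < ‖U x‖ := by
    intro U ρ hρ
    by_contra hcon
    push_neg at hcon
    have hC : Metric.closedBall (0 : X) 1 ⊆ {z : X | ‖U z‖ ≤ ‖U‖ - ρ} := by
      rw [← hull]
      apply closure_minimal
      · apply convexHull_min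
        · intro x hx
          exact hcon x hx
        · intro z hz w hw p q hp hq hpq
          simp only [Set.mem_setOf_eq] at *
          calc ‖U (p • z + q • w)‖ = ‖p • U z + q • U w‖ := by rw [map_add, map_smul, map_smul]
            _ ≤ ‖p • U z‖ + ‖q • U w‖ := norm_add_le _ _
            _ = p * ‖U z‖ + q * ‖U w‖ := by
                rw [norm_smul, norm_smul, Real.norm_eq_abs, Real.norm_eq_abs,
                  abs_of_nonneg hp, abs_of_nonneg hq]
            _ ≤ p * (‖U‖ - ρ) + q * (‖U‖ - ρ) := by
                gcongr
            _ = ‖U‖ - ρ := by rw [← add_mul, hpq, one_mul]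
      · exact isClosed_le (U.continuous.norm) continuous_const
    have h0 : (0:X) ∈ Metric.closedBall (0:X) 1 := by simp
    have hM0 : (0:ℝ) ≤ ‖U‖ - ρ := by simpa using hC h0
    have hbound : ‖U‖ ≤ ‖U‖ - ρ := by
      apply ContinuousLinearMap.opNorm_le_bound _ hM0
      intro z
      by_cases hz : z = 0
      · simp [hz]
      · have hz' : (0:ℝ) < ‖z‖ := norm_pos_iff.2 hz
        have hmem : (‖z‖⁻¹ : ℝ) • z ∈ Metric.closedBall (0:X) 1 := by
          simp only [Metric.mem_closedBall, dist_zero_right]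
          rw [norm_smul, Real.norm_eq_abs, abs_of_nonneg (inv_nonneg.2 (norm_nonneg z)),
            inv_mul_cancel₀ (norm_ne_zero_iff.2 hz)]
        have := hC hmem
        simp only [Set.mem_setOf_eq, map_smul, norm_smul, Real.norm_eq_abs,
          abs_of_nonneg (le_of_lt (inv_pos.2 hz'))] at this
        calc ‖U z‖ = ‖z‖ * (‖z‖⁻¹ * ‖U z‖) := by field_simp
          _ ≤ ‖z‖ * (‖U‖ - ρ) := by gcongr
          _ = (‖U‖ - ρ) * ‖z‖ := mul_comm _ _
    linarith
  -- constants
  obtain ⟨c, hcpos, hc4⟩ : ∃ c : ℝ, 0 < c ∧ 4 * c = ε := ⟨ε/4, by positivity, by ring⟩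
  have hfactpos : ∀ n : ℕ, (0:ℝ) < (Nat.factorial (n+1) : ℝ) := fun n => by
    exact_mod_cast Nat.factorial_pos _
  set β : ℕ → ℝ := fun n => c / (Nat.factorial (n+1) : ℝ) with hβ
  have hβpos : ∀ n, 0 < β n := fun n => div_pos hcpos (hfactpos n)
  have hβsucc : ∀ n : ℕ, β (n+1) = β n / ((n:ℝ)+2) := by
    intro n
    have h1 : (Nat.factorial (n+2) : ℝ) = ((n:ℝ)+2) * (Nat.factorial (n+1) : ℝ) := by
      rw [show n+2 = (n+1)+1 from rfl, Nat.factorial_succ]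
      push_cast; ring
    have h2 : ((Nat.factorial (n+1) : ℝ)) ≠ 0 := (hfactpos n).ne'
    have h3 : ((n:ℝ)+2) ≠ 0 := by positivity
    show c / (Nat.factorial (n+1+1) : ℝ) = c / (Nat.factorial (n+1) : ℝ) / ((n:ℝ)+2)
    rw [show n+1+1 = n+2 from rfl, h1]
    field_simp
  have hβanti : ∀ n m, n ≤ m → β m ≤ β n := by
    intro n m h
    apply div_le_div_of_nonneg_left (le_of_lt hcpos) (hfactpos n)
    exact_mod_cast Nat.factorial_le (by omega)
  have hβhalf : ∀ n, 2 * β (n+1) ≤ β n := by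
    intro n
    have hn2 : (2:ℝ) ≤ (n:ℝ)+2 := by
      have : (0:ℝ) ≤ (n:ℝ) := Nat.cast_nonneg n
      linarith
    rw [hβsucc]
    calc 2 * (β n / ((n:ℝ)+2)) ≤ 2 * (β n / 2) := by gcongr
      _ = β n := by ring
  -- the recursive construction
  have hex : ∀ (U : X →L[ℝ] Y) (n : ℕ), ∃ x, x ∈ S ∧ ‖U‖ - β (n+1) < ‖U x‖ :=
    fun U n => hsup U _ (hβpos (n+1))
  choose pt hptS hpt using hex
  let Ts : ℕ → (X →L[ℝ] Y) := fun n =>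
    Nat.rec T (fun n U => U + β n • ((F (pt U n)).smulRight (dir (U (pt U n))))) n
  let xs : ℕ → X := fun n => pt (Ts n) n
  have hT0 : Ts 0 = T := rfl
  have hTsucc : ∀ n, Ts (n+1) = Ts n + β n • ((F (xs n)).smulRight (dir (Ts n (xs n)))) :=
    fun n => rfl
  have hxS : ∀ n, xs n ∈ S := fun n => hptS _ _
  have hxnorm : ∀ n, ‖xs n‖ = 1 := fun n => hSph _ (hxS n)
  have hFnorm : ∀ n, ‖F (xs n)‖ = 1 := fun n => (hF _ (hxS n)).1
  have hFone : ∀ n, (F (xs n)) (xs n) = 1 := fun n => (hF _ (hxS n)).2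
  have hTx : ∀ n, ‖Ts n‖ - β (n+1) < ‖Ts n (xs n)‖ := fun n => hpt _ _
  have hr1 : ∀ n, ‖(F (xs n)).smulRight (dir (Ts n (xs n)))‖ = 1 := by
    intro n
    rw [ContinuousLinearMap.norm_smulRight_apply, hFnorm, hdir1, one_mul]
  have hstep : ∀ n, ‖Ts (n+1) - Ts n‖ = β n := by
    intro n
    rw [hTsucc, add_sub_cancel_left]
    rw [norm_smul (β n) ((F (xs n)).smulRight (dir ((Ts n) (xs n))))]
    rw [Real.norm_eq_abs, abs_of_pos (hβpos n), hr1, mul_one]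
  have happ : ∀ n (u : X), Ts (n+1) u = Ts n u + (β n * (F (xs n)) u) • dir (Ts n (xs n)) := by
    intro n u
    rw [hTsucc]
    simp [ContinuousLinearMap.smulRight_apply, smul_smul]
  have happx : ∀ n, ‖Ts (n+1) (xs n)‖ = ‖Ts n (xs n)‖ + β n := by
    intro n
    rw [happ, hFone, mul_one]
    exact hdir2 _ _ (le_of_lt (hβpos n))
  have hlow : ∀ n, ‖Ts n‖ + β n - β (n+1) < ‖Ts (n+1)‖ := by
    intro n
    have h1 := happx n
    have h2 := hTx n
    have h3 : ‖Ts (n+1) (xs n)‖ ≤ ‖Ts (n+1)‖ :=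
      ContinuousLinearMap.unit_le_opNorm _ _ (le_of_eq (hxnorm n))
    linarith
  have hup : ∀ n, ‖Ts (n+1)‖ ≤ ‖Ts n‖ + β n := by
    intro n
    have h1 := norm_sub_norm_le (Ts (n+1)) (Ts n)
    have h2 := hstep n
    linarith
  have hdistle : ∀ n m, n ≤ m → ‖Ts m - Ts n‖ ≤ 2 * β n - 2 * β m := by
    intro n m h
    induction m with
    | zero =>
      have : n = 0 := Nat.le_zero.mp h
      subst this
      simp
    | succ m ih =>
      rcases eq_or_lt_of_le h with rfl | h'
      · simp
      · have hnm : n ≤ m := Nat.lt_succ_iff.mp h'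
        have h1 := ih hnm
        have h2 : Ts (m+1) - Ts n = (Ts (m+1) - Ts m) + (Ts m - Ts n) := by abel
        have h3 : ‖Ts (m+1) - Ts n‖ ≤ ‖Ts (m+1) - Ts m‖ + ‖Ts m - Ts n‖ := by
          rw [h2]; exact norm_add_le _ _
        have h4 := hstep m
        have h5 := hβhalf m
        linarith
  clear_value Ts xs
  -- convergence of the sequence of operators
  have hcauchy : CauchySeq Ts := by
    apply cauchySeq_of_le_tendsto_0 (fun n => 2 * β n)
    · intro n m N hn hm
      rcases le_total n m with h | h
      · rw [dist_eq_norm, norm_sub_rev]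
        have h1 := hdistle n m h
        have h2 := hβpos m
        have h3 := hβanti N n hn
        linarith
      · rw [dist_eq_norm]
        have h1 := hdistle m n h
        have h2 := hβpos n
        have h3 := hβanti N m hm
        linarith
    · have hmain : Tendsto (fun n : ℕ => 2*c/((n+1 : ℕ):ℝ)) atTop (𝓝 0) :=
        (tendsto_const_div_atTop_nhds_zero_nat (2*c)).comp (tendsto_add_atTop_nat 1)
      apply squeeze_zero (fun n => by positivity) _ hmain
      intro n
      have h1 : ((n+1 : ℕ):ℝ) ≤ ((Nat.factorial (n+1) : ℕ):ℝ) := by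
        exact_mod_cast Nat.self_le_factorial (n+1)
      have h2 : (0:ℝ) < ((n+1 : ℕ):ℝ) := by positivity
      have h3 : β n ≤ c/((n+1 : ℕ):ℝ) :=
        div_le_div_of_nonneg_left (le_of_lt hcpos) h2 h1
      have h4 : 2*c/((n+1 : ℕ):ℝ) = 2*(c/((n+1:ℕ):ℝ)) := by ring
      rw [h4]
      linarith
  obtain ⟨S', hS'lim⟩ := cauchySeq_tendsto_of_complete hcauchy
  have hS'dist : ∀ n, ‖S' - Ts n‖ ≤ 2 * β n := by
    intro n
    have h1 : Tendsto (fun m => ‖Ts m - Ts n‖) atTop (𝓝 ‖S' - Ts n‖) :=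
      (hS'lim.sub tendsto_const_nhds).norm
    apply le_of_tendsto h1
    filter_upwards [eventually_ge_atTop n] with m hm
    have h2 := hdistle n m hm
    have h3 := hβpos m
    linarith
  have hclose : ‖T - S'‖ < ε := by
    have h1 := hS'dist 0
    have h2 : ‖T - S'‖ = ‖S' - Ts 0‖ := by rw [hT0, norm_sub_rev]
    have h3 : β 0 = c := by
      show c / ((Nat.factorial 1 : ℕ):ℝ) = c
      norm_num [Nat.factorial]
    rw [h3] at h1
    rw [h2]
    linarith
  clear_value β
  have hS'norm_lim : Tendsto (fun n => ‖Ts n‖) atTop (𝓝 ‖S'‖) := hS'lim.norm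
  have hmonoTs : Monotone fun n => ‖Ts n‖ := by
    apply monotone_nat_of_le_succ
    intro n
    have h1 := hlow n
    have h2 := hβhalf n
    have h3 := hβpos (n+1)
    linarith
  have hale : ∀ n, ‖Ts n‖ ≤ ‖S'‖ := fun n => hmonoTs.ge_of_tendsto hS'norm_lim n
  have haup : ∀ n, ‖S'‖ ≤ ‖Ts n‖ + 2 * β n := by
    intro n
    have h1 := hS'dist n
    have h2 := norm_sub_norm_le S' (Ts n)
    linarith
  have han_le : ∀ n, ‖Ts n‖ ≤ ‖S'‖ - β n + β (n+1) := by
    intro n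
    have h1 := hlow n
    have h2 := hale (n+1)
    linarith
  have happle : ∀ n (u : X), ‖u‖ ≤ 1 → ‖S' u - Ts n u‖ ≤ 2 * β n := by
    intro n u hu
    have h1 : S' u - Ts n u = (S' - Ts n) u := by simp [ContinuousLinearMap.sub_apply]
    rw [h1]
    exact le_trans (ContinuousLinearMap.unit_le_opNorm _ _ hu) (hS'dist n)
  have hkey : ∀ n (u : X), ‖u‖ ≤ 1 →
      1 - (‖S'‖ - ‖S' u‖)/β n - 3/((n:ℝ)+2) ≤ |(F (xs n)) u| := by
    intro n u hu
    have hβn := hβpos n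
    have h1 : ‖S' u‖ ≤ ‖Ts (n+1) u‖ + 2 * β (n+1) := by
      have ha := happle (n+1) u hu
      have hb := norm_sub_norm_le (S' u) (Ts (n+1) u)
      linarith
    have h2 : ‖Ts (n+1) u‖ ≤ ‖Ts n‖ + β n * |(F (xs n)) u| := by
      rw [happ]
      have h3 : ‖Ts n u‖ ≤ ‖Ts n‖ := ContinuousLinearMap.unit_le_opNorm _ _ hu
      have h4 : ‖(β n * (F (xs n)) u) • dir (Ts n (xs n))‖ = β n * |(F (xs n)) u| := by
        rw [norm_smul, hdir1, mul_one, Real.norm_eq_abs, abs_mul, abs_of_pos (hβpos n)]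
      calc ‖Ts n u + (β n * (F (xs n)) u) • dir (Ts n (xs n))‖
          ≤ ‖Ts n u‖ + ‖(β n * (F (xs n)) u) • dir (Ts n (xs n))‖ := norm_add_le _ _
        _ ≤ ‖Ts n‖ + β n * |(F (xs n)) u| := by rw [h4]; linarith
    have h3 := han_le n
    have h5 : β n - (‖S'‖ - ‖S' u‖) - 3 * β (n+1) ≤ β n * |(F (xs n)) u| := by linarith
    have h6 : (β n - (‖S'‖ - ‖S' u‖) - 3 * β (n+1)) / β n ≤ |(F (xs n)) u| := by
      rw [div_le_iff₀ hβn]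
      linarith [h5]
    have hn2 : ((n:ℝ)+2) ≠ 0 := by positivity
    have h7 : (β n - (‖S'‖ - ‖S' u‖) - 3 * β (n+1)) / β n
        = 1 - (‖S'‖ - ‖S' u‖)/β n - 3/((n:ℝ)+2) := by
      rw [hβsucc n]
      field_simp
    rw [h7] at h6
    exact h6
  have hnearmax : ∀ n, ‖S'‖ - ‖S' (xs n)‖ ≤ β n + 3 * β (n+1) := by
    intro n
    have h1 : ‖Ts (n+1) (xs n)‖ ≤ ‖S' (xs n)‖ + 2 * β (n+1) := by
      have ha := happle (n+1) (xs n) (le_of_eq (hxnorm n))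
      have hb := norm_sub_norm_le (Ts (n+1) (xs n)) (S' (xs n))
      have hc : ‖Ts (n+1) (xs n) - S' (xs n)‖ = ‖S' (xs n) - Ts (n+1) (xs n)‖ :=
        norm_sub_rev _ _
      linarith
    have h2 := happx n
    have h3 := hTx n
    have h4 := haup n
    linarith
  have hfar : ∀ n m : ℕ, n ≤ m → 1 - 6/((n:ℝ)+2) ≤ |(F (xs n)) (xs m)| := by
    intro n m hnm
    have hn2pos : (0:ℝ) < (n:ℝ)+2 := by positivity
    rcases eq_or_lt_of_le hnm with rfl | h
    · rw [hFone, abs_one]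
      have : 0 ≤ 6/((n:ℝ)+2) := by positivity
      linarith
    · have h1 := hkey n (xs m) (le_of_eq (hxnorm m))
      have h2 := hnearmax m
      have h3 : β m ≤ β n / ((n:ℝ)+2) := by rw [← hβsucc]; exact hβanti (n+1) m h
      have h4 : 2*β (m+1) ≤ β m := hβhalf m
      have hβq : (0:ℝ) ≤ β n / ((n:ℝ)+2) := le_of_lt (div_pos (hβpos n) hn2pos)
      have h5 : ‖S'‖ - ‖S' (xs m)‖ ≤ 3 * (β n / ((n:ℝ)+2)) := by linarith
      have h6 : (‖S'‖ - ‖S' (xs m)‖)/β n ≤ 3/((n:ℝ)+2) := by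
        have h6a : (‖S'‖ - ‖S' (xs m)‖)/β n ≤ (3*(β n/((n:ℝ)+2)))/β n := by
          gcongr
          exact (hβpos n).le
        have h6b : (3*(β n/((n:ℝ)+2)))/β n = 3/((n:ℝ)+2) := by
          have hb : β n ≠ 0 := (hβpos n).ne'
          have hd : ((n:ℝ)+2) ≠ 0 := hn2pos.ne'
          field_simp
        rw [h6b] at h6a
        exact h6a
      have h8 : (6:ℝ)/((n:ℝ)+2) = 3/((n:ℝ)+2) + 3/((n:ℝ)+2) := by ring
      linarith [h1, h6]
  -- two-sided approximation of xs n by xs m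
  have hDD : ∀ ε' : ℝ, 0 < ε' → ∃ N : ℕ, ∀ n m : ℕ, N ≤ n → n ≤ m →
      ∃ t : ℝ, (t = 1 ∨ t = -1) ∧ ‖xs n - t • xs m‖ < ε' := by
    intro ε' hε'
    obtain ⟨δ, hδpos, hδprop⟩ := hδu ε' hε'
    obtain ⟨N, hN⟩ : ∃ N : ℕ, 6/((N:ℝ)+2) < δ := by
      obtain ⟨N, hN⟩ := exists_nat_gt (6/δ)
      refine ⟨N, ?_⟩
      have hN2pos : (0:ℝ) < (N:ℝ)+2 := by positivity
      have hN2 : 6/δ < (N:ℝ)+2 := lt_of_lt_of_le hN (by linarith)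
      rw [div_lt_iff₀ hδpos] at hN2
      rw [div_lt_iff₀ hN2pos]
      have hcm : ((N:ℝ)+2)*δ = δ*((N:ℝ)+2) := mul_comm _ _
      linarith
    refine ⟨N, fun n m hNn hnm => ?_⟩
    have hcast : (N:ℝ) ≤ (n:ℝ) := by exact_mod_cast hNn
    have h6 : 6/((n:ℝ)+2) ≤ 6/((N:ℝ)+2) :=
      div_le_div_of_nonneg_left (by norm_num) (by positivity) (by linarith)
    have habs : 1 - δ < |(F (xs n)) (xs m)| := by
      have := hfar n m hnm
      linarith
    rcases le_or_gt 0 ((F (xs n)) (xs m)) with hposs | hneg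
    · refine ⟨1, Or.inl rfl, ?_⟩
      rw [one_smul]
      apply hδprop (xs n) (hxS n) (xs m) (le_of_eq (hxnorm m))
      rwa [abs_of_nonneg hposs] at habs
    · refine ⟨-1, Or.inr rfl, ?_⟩
      have h1 : (F (xs n)) (-(xs m)) > 1 - δ := by
        rw [map_neg]
        rw [abs_of_neg hneg] at habs
        linarith
      have h2 := hδprop (xs n) (hxS n) (-(xs m))
        (by rw [norm_neg]; exact le_of_eq (hxnorm m)) h1
      rw [neg_one_smul]
      exact h2
  -- the sign sequence
  obtain ⟨N₀, hN₀⟩ := hDD (1/2) (by norm_num)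
  have hsgex : ∀ m : ℕ, ∃ s : ℝ, (s = 1 ∨ s = -1) ∧
      ‖xs N₀ - s • xs m‖ ≤ ‖xs N₀ - xs m‖ ∧ ‖xs N₀ - s • xs m‖ ≤ ‖xs N₀ + xs m‖ := by
    intro m
    by_cases hcond : ‖xs N₀ - xs m‖ ≤ ‖xs N₀ + xs m‖
    · refine ⟨1, Or.inl rfl, ?_, ?_⟩ <;> rw [one_smul]
      exact hcond
    · refine ⟨-1, Or.inr rfl, ?_, ?_⟩ <;> rw [neg_one_smul, sub_neg_eq_add]
      linarith [not_le.mp hcond]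
  choose sg hsgval hsgle1 hsgle2 using hsgex
  set z : ℕ → X := fun m => sg m • xs m with hzdef
  have hznorm : ∀ m, ‖z m‖ = 1 := by
    intro m
    show ‖sg m • xs m‖ = 1
    rcases hsgval m with h | h <;> rw [h]
    · rw [one_smul]; exact hxnorm m
    · rw [neg_one_smul, norm_neg]; exact hxnorm m
  have hz0 : ∀ m, N₀ ≤ m → ‖xs N₀ - z m‖ < 1/2 := by
    intro m hm
    obtain ⟨t, ht, hlt⟩ := hN₀ N₀ m le_rfl hm
    have hmin : ‖xs N₀ - z m‖ ≤ ‖xs N₀ - t • xs m‖ := by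
      rcases ht with rfl | rfl
      · rw [one_smul]
        exact hsgle1 m
      · rw [neg_one_smul, sub_neg_eq_add]
        exact hsgle2 m
    linarith
  have hzcauchy : CauchySeq z := by
    rw [Metric.cauchySeq_iff]
    intro ε' hε'
    have hε3 : 0 < min ε' (1/3) := lt_min hε' (by norm_num)
    obtain ⟨N₁, hN₁⟩ := hDD (min ε' (1/3)) hε3
    have key : ∀ p q : ℕ, max N₁ N₀ ≤ p → p ≤ q → ‖z p - z q‖ < min ε' (1/3) := by
      intro p q hp hpq
      obtain ⟨t, ht, hlt⟩ := hN₁ p q (le_trans (le_max_left _ _) hp) hpq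
      have hb : ‖z p - z q‖ < 1 := by
        have h1 := hz0 p (le_trans (le_max_right _ _) hp)
        have h2 := hz0 q (le_trans (le_max_right _ _) (le_trans hp hpq))
        have h3 : z p - z q = (xs N₀ - z q) - (xs N₀ - z p) := by abel
        rw [h3]
        calc ‖(xs N₀ - z q) - (xs N₀ - z p)‖
            ≤ ‖xs N₀ - z q‖ + ‖xs N₀ - z p‖ := norm_sub_le _ _
          _ < 1 := by linarith
      have heq : z p - z q = sg p • (xs p - (sg p * sg q) • xs q) := by
        show sg p • xs p - sg q • xs q = sg p • (xs p - (sg p * sg q) • xs q)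
        rcases hsgval p with h | h <;> rcases hsgval q with h' | h' <;> rw [h, h'] <;>
          simp only [one_smul, neg_one_smul, one_mul, mul_one, neg_one_mul,
            mul_neg, neg_neg, smul_sub, smul_neg, sub_neg_eq_add] <;> abel
      have hnormeq : ‖z p - z q‖ = ‖xs p - (sg p * sg q) • xs q‖ := by
        rw [heq]
        rcases hsgval p with h | h <;>
          simp only [h, one_smul, neg_one_smul, norm_neg]
      by_cases hts : sg p * sg q = t
      · rw [hnormeq, hts]; exact hlt
      · exfalso
        have hsm : sg p * sg q = -t := by
          rcases ht with rfl | rfl <;> rcases hsgval p with h | h <;>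
            rcases hsgval q with h' | h' <;> simp [h, h'] at hts ⊢
        have h4 : 2 - min ε' (1/3) ≤ ‖xs p - (sg p * sg q) • xs q‖ := by
          rw [hsm, neg_smul, sub_neg_eq_add]
          have h5 : xs p + t • xs q = (2:ℝ) • (t • xs q) + (xs p - t • xs q) := by
            rw [two_smul]; abel
          rw [h5]
          have h6 : ‖(2:ℝ) • (t • xs q)‖ = 2 := by
            rcases ht with rfl | rfl <;>
              simp [norm_smul, hxnorm q]
          have h7 : ‖(2:ℝ) • (t • xs q)‖ - ‖xs p - t • xs q‖
              ≤ ‖(2:ℝ) • (t • xs q) + (xs p - t • xs q)‖ := by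
            have h8 := norm_sub_le ((2:ℝ) • (t • xs q) + (xs p - t • xs q)) (xs p - t • xs q)
            have h9 : (2:ℝ) • (t • xs q) + (xs p - t • xs q) - (xs p - t • xs q)
                = (2:ℝ) • (t • xs q) := by abel
            rw [h9] at h8
            linarith
          rw [h6] at h7
          linarith
        rw [← hnormeq] at h4
        have h10 : min ε' (1/3) ≤ 1/3 := min_le_right _ _
        linarith
    refine ⟨max N₁ N₀, fun m hm k hk => ?_⟩
    rcases le_total m k with h | h
    · rw [dist_eq_norm]
      exact lt_of_lt_of_le (key m k hm h) (min_le_left _ _)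
    · rw [dist_comm, dist_eq_norm]
      exact lt_of_lt_of_le (key k m hk h) (min_le_left _ _)
  obtain ⟨x, hxlim⟩ := cauchySeq_tendsto_of_complete hzcauchy
  have hxnorm1 : ‖x‖ = 1 := by
    have h1 : Tendsto (fun m => ‖z m‖) atTop (𝓝 ‖x‖) := hxlim.norm
    have h2 : (fun m => ‖z m‖) = fun _ => (1:ℝ) := funext hznorm
    rw [h2] at h1
    exact tendsto_nhds_unique h1 tendsto_const_nhds
  refine ⟨S', ⟨x, hxnorm1, ?_⟩, hclose⟩
  intro u hu1 hu2
  have hmin : Tendsto (fun k => min ‖u k - x‖ ‖u k + x‖) atTop (𝓝 0) := by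
    rw [Metric.tendsto_atTop]
    intro ε' hε'
    obtain ⟨δ, hδpos, hδprop⟩ := hδu (ε'/2) (by linarith)
    obtain ⟨n₁, hn₁⟩ : ∃ n₁ : ℕ, 3/((n₁:ℝ)+2) < δ/2 := by
      obtain ⟨N, hN⟩ := exists_nat_gt (3/(δ/2))
      refine ⟨N, ?_⟩
      have hp : (0:ℝ) < (N:ℝ)+2 := by positivity
      have h2 : 3/(δ/2) < (N:ℝ)+2 := lt_of_lt_of_le hN (by linarith)
      rw [div_lt_iff₀ (by linarith)] at h2
      rw [div_lt_iff₀ hp]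
      have hcm : ((N:ℝ)+2)*(δ/2) = (δ/2)*((N:ℝ)+2) := mul_comm _ _
      linarith
    obtain ⟨n₂, hn₂⟩ := Metric.tendsto_atTop.mp hxlim (ε'/2) (by linarith)
    set n := max n₁ (max n₂ N₀) with hn
    have hna : 3/((n:ℝ)+2) < δ/2 := by
      have hle : (n₁:ℝ) ≤ (n:ℝ) := by exact_mod_cast le_max_left _ _
      have h3 : 3/((n:ℝ)+2) ≤ 3/((n₁:ℝ)+2) :=
        div_le_div_of_nonneg_left (by norm_num) (by positivity) (by linarith)
      linarith
    have hnb : ‖z n - x‖ < ε'/2 := by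
      have h4 := hn₂ n (le_trans (le_max_left _ _) (le_max_right _ _))
      rwa [dist_eq_norm] at h4
    obtain ⟨K, hK⟩ := Metric.tendsto_atTop.mp hu2 (β n * (δ/2))
      (mul_pos (hβpos n) (by linarith))
    refine ⟨K, fun k hk => ?_⟩
    have hdk : ‖S'‖ - ‖S' (u k)‖ < β n * (δ/2) := by
      have h5 := hK k hk
      rw [Real.dist_eq] at h5
      have h6 := abs_lt.mp h5
      linarith [h6.1]
    have hdiv : (‖S'‖ - ‖S' (u k)‖)/β n < δ/2 := by
      rw [div_lt_iff₀ (hβpos n)]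
      have hcm : (δ/2) * β n = β n * (δ/2) := mul_comm _ _
      linarith
    have hFk : 1 - δ < |(F (xs n)) (u k)| := by
      have h7 := hkey n (u k) (hu1 k)
      linarith
    have hgoal : min ‖u k - x‖ ‖u k + x‖ < ε' := by
      rcases le_or_gt 0 ((F (xs n)) (u k)) with hposs | hneg
      · have h1 : ‖xs n - u k‖ < ε'/2 :=
          hδprop (xs n) (hxS n) (u k) (hu1 k) (by rwa [abs_of_nonneg hposs] at hFk)
        have h2 : ‖z n - sg n • u k‖ < ε'/2 := by
          have heq : z n - sg n • u k = sg n • (xs n - u k) := by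
            show sg n • xs n - sg n • u k = _
            rw [smul_sub]
          rw [heq]
          rcases hsgval n with h | h <;> rw [h]
          · rwa [one_smul]
          · rwa [neg_one_smul, norm_neg]
        have h3 : ‖x - sg n • u k‖ < ε' := by
          have htri : x - sg n • u k = -(z n - x) + (z n - sg n • u k) := by abel
          rw [htri]
          calc ‖-(z n - x) + (z n - sg n • u k)‖
              ≤ ‖-(z n - x)‖ + ‖z n - sg n • u k‖ := norm_add_le _ _
            _ = ‖z n - x‖ + ‖z n - sg n • u k‖ := by rw [norm_neg]
            _ < ε' := by linarith
        rcases hsgval n with h | h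
        · rw [h, one_smul] at h3
          have h8 : ‖u k - x‖ < ε' := by rwa [norm_sub_rev] at h3
          exact lt_of_le_of_lt (min_le_left _ _) h8
        · rw [h, neg_one_smul] at h3
          have h8 : ‖u k + x‖ < ε' := by
            have heq2 : x - -u k = u k + x := by abel
            rwa [heq2] at h3
          exact lt_of_le_of_lt (min_le_right _ _) h8
      · have hneg' : (F (xs n)) (-(u k)) > 1 - δ := by
          rw [map_neg]
          rw [abs_of_neg hneg] at hFk
          linarith
        have h1 : ‖xs n - -(u k)‖ < ε'/2 :=
          hδprop (xs n) (hxS n) (-(u k)) (by rw [norm_neg]; exact hu1 k) hneg'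
        have h1' : ‖xs n + u k‖ < ε'/2 := by rwa [sub_neg_eq_add] at h1
        have h2 : ‖z n + sg n • u k‖ < ε'/2 := by
          have heq : z n + sg n • u k = sg n • (xs n + u k) := by
            show sg n • xs n + sg n • u k = _
            rw [smul_add]
          rw [heq]
          rcases hsgval n with h | h <;> rw [h]
          · rwa [one_smul]
          · rwa [neg_one_smul, norm_neg]
        have h3 : ‖x + sg n • u k‖ < ε' := by
          have htri : x + sg n • u k = -(z n - x) + (z n + sg n • u k) := by abel
          rw [htri]
          calc ‖-(z n - x) + (z n + sg n • u k)‖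
              ≤ ‖-(z n - x)‖ + ‖z n + sg n • u k‖ := norm_add_le _ _
            _ = ‖z n - x‖ + ‖z n + sg n • u k‖ := by rw [norm_neg]
            _ < ε' := by linarith
        rcases hsgval n with h | h
        · rw [h, one_smul] at h3
          have h8 : ‖u k + x‖ < ε' := by rwa [add_comm] at h3
          exact lt_of_le_of_lt (min_le_right _ _) h8
        · rw [h, neg_one_smul] at h3
          have h8 : ‖u k - x‖ < ε' := by
            have heq2 : x + -u k = -(u k - x) := by abel
            rw [heq2, norm_neg] at h3
            exact h3
          exact lt_of_le_of_lt (min_le_left _ _) h8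
    rw [Real.dist_eq, sub_zero, abs_of_nonneg (le_min (norm_nonneg _) (norm_nonneg _))]
    exact hgoal
  by_cases hfreq : ∃ᶠ k in atTop, ‖u k - x‖ ≤ ‖u k + x‖
  · obtain ⟨φ, hφmono, hφP⟩ := Filter.extraction_of_frequently_atTop hfreq
    refine ⟨φ, hφmono, Or.inl ?_⟩
    rw [tendsto_iff_norm_sub_tendsto_zero]
    have h1 : Tendsto (fun j => min ‖u (φ j) - x‖ ‖u (φ j) + x‖) atTop (𝓝 0) :=
      hmin.comp hφmono.tendsto_atTop
    exact h1.congr fun j => min_eq_left (hφP j)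
  · rw [Filter.not_frequently] at hfreq
    have hfreq2 : ∃ᶠ k in atTop, ‖u k + x‖ ≤ ‖u k - x‖ :=
      (hfreq.mono fun k hk => le_of_lt (not_le.mp hk)).frequently
    obtain ⟨φ, hφmono, hφP⟩ := Filter.extraction_of_frequently_atTop hfreq2
    refine ⟨φ, hφmono, Or.inr ?_⟩
    rw [tendsto_iff_norm_sub_tendsto_zero]
    have h1 : Tendsto (fun j => min ‖u (φ j) - x‖ ‖u (φ j) + x‖) atTop (𝓝 0) :=
      hmin.comp hφmono.tendsto_atTop
    have h2 : ∀ j, min ‖u (φ j) - x‖ ‖u (φ j) + x‖ = ‖u (φ j) - -x‖ := by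
      intro j
      rw [min_eq_right (hφP j), sub_neg_eq_add]
    exact h1.congr h2
end
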